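/- arXiv:1611.07267 — 6 statements merged into one kernel-verified Lean document; each statement's English description precedes it below -/
import Mathlib

section
/- For any infinite cardinal κ, the Σ-product Σ(2^κ) = {x ∈ 2^κ : x(α) = 1 for at most countably many α}, with the subspace topology from the product topology on 2^κ, is a countably compact ccc Tychonoff space; for κ > ℵ₁ it is cellular-Lindelöf but not linearly Lindelöf. -/
open Cardinal Set Topology

universe u

/-- A subset `D` is discrete (as a subspace): every point of `D` has an open
neighbourhood meeting `D` only in that point. -/
def IsDiscreteSubset {X : Type u} [TopologicalSpace X] (D : Set X) : Prop :=
  ∀ x ∈ D, ∃ U : Set X, IsOpen U ∧ U ∩ D = {x}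

/-- `X` is almost discretely Lindelöf: every discrete subset is contained in a
Lindelöf subspace. -/
def AlmostDiscretelyLindelof (X : Type u) [TopologicalSpace X] : Prop :=
  ∀ D : Set X, IsDiscreteSubset D → ∃ L : Set X, IsLindelof L ∧ D ⊆ L

/-- The character of `X` is at most `κ`: every point has an open neighbourhood
base of cardinality at most `κ`. -/
def HasCharacterLE (X : Type u) [TopologicalSpace X] (κ : Cardinal.{u}) : Prop :=
  ∀ x : X, ∃ B : Set (Set X), #B ≤ κ ∧ (∀ U ∈ B, IsOpen U ∧ x ∈ U) ∧
    ∀ V ∈ nhds x, ∃ U ∈ B, U ⊆ V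

/-- `R` is right-separated: it carries a well-order in which each point has a
neighbourhood avoiding all strictly later points (initial segments are open). -/
def RightSeparated {X : Type u} [TopologicalSpace X] (R : Set X) : Prop :=
  ∃ r : R → R → Prop, IsWellOrder R r ∧
    ∀ a : R, ∃ U : Set X, IsOpen U ∧ (a : X) ∈ U ∧ ∀ b : R, (b : X) ∈ U → ¬ r a b

/-- `R` is left-separated: it carries a well-order in which each point has a
neighbourhood avoiding all strictly earlier points (initial segments are closed). -/
def LeftSeparated {X : Type u} [TopologicalSpace X] (R : Set X) : Prop :=
  ∃ r : R → R → Prop, IsWellOrder R r ∧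
    ∀ a : R, ∃ U : Set X, IsOpen U ∧ (a : X) ∈ U ∧ ∀ b : R, (b : X) ∈ U → ¬ r b a

/-- The θ-closure operator: `x ∈ thetaCl A` iff the closure of every open
neighbourhood of `x` meets `A`. -/
def thetaCl {X : Type u} [TopologicalSpace X] (A : Set X) : Set X :=
  {x | ∀ U : Set X, IsOpen U → x ∈ U → (closure U ∩ A).Nonempty}

/-- `A` is θ-closed if it coincides with its θ-closure operator value. -/
def IsThetaClosed {X : Type u} [TopologicalSpace X] (A : Set X) : Prop :=
  thetaCl A = A

/-- `[A]_θ`, the smallest θ-closed set containing `A`. -/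
def thetaClosure {X : Type u} [TopologicalSpace X] (A : Set X) : Set X :=
  ⋂₀ {B : Set X | A ⊆ B ∧ IsThetaClosed B}

/-- A (well-ordered) sequence is free if at every cut the closures of the two
pieces are disjoint. -/
def IsFreeSeq {X : Type u} [TopologicalSpace X] {ι : Type u} [LinearOrder ι]
    (f : ι → X) : Prop :=
  ∀ i : ι, closure (f '' {j | j < i}) ∩ closure (f '' {j | i ≤ j}) = ∅

/-- A (well-ordered) sequence is θ-free if at every cut the θ-closure of the
initial piece is disjoint from the closure of the final piece. -/
def IsThetaFreeSeq {X : Type u} [TopologicalSpace X] {ι : Type u} [LinearOrder ι]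
    (f : ι → X) : Prop :=
  ∀ i : ι, thetaClosure (f '' {j | j < i}) ∩ closure (f '' {j | i ≤ j}) = ∅

/-- A cellular family: pairwise disjoint nonempty open sets. -/
def IsCellularFamily {X : Type u} [TopologicalSpace X] (𝒰 : Set (Set X)) : Prop :=
  (∀ U ∈ 𝒰, IsOpen U ∧ U.Nonempty) ∧ 𝒰.PairwiseDisjoint id

/-- `X` is cellular-Lindelöf: every cellular family admits a Lindelöf subspace
meeting each of its members. -/
def CellularLindelof (X : Type u) [TopologicalSpace X] : Prop :=
  ∀ 𝒰 : Set (Set X), IsCellularFamily 𝒰 →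
    ∃ L : Set X, IsLindelof L ∧ ∀ U ∈ 𝒰, (U ∩ L).Nonempty

/-- `lam` is a caliber of `X`: any `lam`-many nonempty open sets include
`lam`-many with a common point. -/
def IsCaliber (X : Type u) [TopologicalSpace X] (lam : Cardinal.{u}) : Prop :=
  ∀ (ι : Type u) (U : ι → Set X), #ι = lam →
    (∀ i, IsOpen (U i) ∧ (U i).Nonempty) →
    ∃ S : Set ι, #S = lam ∧ (⋂ i ∈ S, U i).Nonempty

/-- The Σ-product of `#ι` copies of the discrete two-point space: points of
`2^ι` with at most countably many coordinates equal to `true`. -/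
def SigmaProd (ι : Type u) : Type u := {x : ι → Bool // {i : ι | x i = true}.Countable}

instance (ι : Type u) : TopologicalSpace (SigmaProd ι) :=
  instTopologicalSpaceSubtype

/-- `X` is countably compact: every countable open cover has a finite subcover. -/
def CountablyCompactSpace' (X : Type u) [TopologicalSpace X] : Prop :=
  ∀ U : ℕ → Set X, (∀ n, IsOpen (U n)) → (⋃ n, U n) = Set.univ →
    ∃ F : Finset ℕ, (⋃ n ∈ F, U n) = Set.univ

/-- `X` is linearly Lindelöf: every open cover which is a chain under inclusion
has a countable subcover. -/
def LinearlyLindelofSpace (X : Type u) [TopologicalSpace X] : Prop :=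
  ∀ 𝒰 : Set (Set X), (∀ U ∈ 𝒰, IsOpen U) → IsChain (· ⊆ ·) 𝒰 →
    ⋃₀ 𝒰 = Set.univ → ∃ 𝒱 ⊆ 𝒰, 𝒱.Countable ∧ ⋃₀ 𝒱 = Set.univ


lemma omega1_initialSeg_countable (α : (Cardinal.aleph 1 : Cardinal.{u}).ord.ToType) :
    {β : (Cardinal.aleph 1 : Cardinal.{u}).ord.ToType | β < α}.Countable := by
  rw [Cardinal.countable_iff_lt_aleph_one]
  exact lt_of_le_of_lt (Cardinal.mk_le_mk_of_subset (fun b hb => hb))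
    (Cardinal.mk_Iio_ord_toType α)

lemma omega1_nonempty : Nonempty (Cardinal.aleph 1 : Cardinal.{u}).ord.ToType := by
  rw [Ordinal.toType_nonempty_iff_ne_zero]
  intro h
  have := congrArg Ordinal.card h
  rw [Cardinal.card_ord] at this
  simp at this
  exact absurd this (Cardinal.aleph_pos 1).ne'

lemma omega1_strict_ub {A : Set ((Cardinal.aleph 1 : Cardinal.{u}).ord.ToType)}
    (hA : A.Countable) : ∃ γ, ∀ a ∈ A, a < γ := by
  set e := Ordinal.ToType.mk (o := (Cardinal.aleph 1 : Cardinal.{u}).ord) with he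
  set f : A → Ordinal.{u} := fun a => (e.symm a.1).1 with hf
  have hflt : ∀ a : A, f a < (Cardinal.aleph 1 : Cardinal.{u}).ord := fun a => (e.symm a.1).2
  have hcard : #A < Cardinal.aleph 1 := (Cardinal.countable_iff_lt_aleph_one A).mp hA
  have hsup : iSup f < (Cardinal.aleph 1 : Cardinal.{u}).ord :=
    Cardinal.iSup_lt_ord_of_isRegular Cardinal.isRegular_aleph_one hcard hflt
  have hlim : Order.IsSuccLimit ((Cardinal.aleph 1 : Cardinal.{u}).ord) :=
    Cardinal.isSuccLimit_ord (Cardinal.aleph0_le_aleph 1)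
  have hsucc : Order.succ (iSup f) < (Cardinal.aleph 1 : Cardinal.{u}).ord := hlim.succ_lt hsup
  refine ⟨e ⟨Order.succ (iSup f), hsucc⟩, fun a ha => ?_⟩
  have ha' : a = e (e.symm a) := (e.apply_symm_apply a).symm
  rw [ha', e.lt_iff_lt]
  have hle : f ⟨a, ha⟩ ≤ iSup f := Ordinal.le_iSup f ⟨a, ha⟩
  exact Subtype.mk_lt_mk.mpr (lt_of_le_of_lt hle (Order.lt_succ_of_le (le_refl _)))


/-- incompatibility of finite partial conditions -/
def Incomp {ι : Type u} (p q : Finset ι × (ι → Bool)) : Prop :=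
  ∃ i, i ∈ p.1 ∧ i ∈ q.1 ∧ p.2 i ≠ q.2 i

theorem antichain_countable {ι : Type u} :
    ∀ n : ℕ, ∀ F : Set (Finset ι × (ι → Bool)),
      (∀ p ∈ F, p.1.card ≤ n) → F.Pairwise Incomp → F.Countable := by
  intro n
  induction n with
  | zero =>
    intro F hcard hpair
    apply Set.Subsingleton.countable
    intro p hp q hq
    by_contra hne
    obtain ⟨i, hi, -, -⟩ := hpair hp hq hne
    have hemp : p.1 = ∅ := Finset.card_eq_zero.mp (Nat.le_zero.mp (hcard p hp))
    rw [hemp] at hi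
    exact absurd hi (Finset.notMem_empty i)
  | succ n ih =>
    intro F hcard hpair
    classical
    by_contra hF
    -- there is a coordinate in uncountably many domains
    have hα : ∃ α : ι, ¬ ({p ∈ F | α ∈ p.1}).Countable := by
      by_contra hall
      push_neg at hall
      have hFne : F.Nonempty := by
        rcases F.eq_empty_or_nonempty with h | h
        · exact absurd (h ▸ Set.countable_empty) hF
        · exact h
      obtain ⟨p₀, hp₀⟩ := hFne
      have hsub : F ⊆ insert p₀ (⋃ α ∈ p₀.1, {p ∈ F | α ∈ p.1}) := by
        intro p hp
        by_cases hpe : p = p₀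
        · exact hpe ▸ Set.mem_insert _ _
        · obtain ⟨i, hi1, hi2, -⟩ := hpair hp hp₀ hpe
          exact Set.mem_insert_of_mem _ (Set.mem_biUnion hi2 ⟨hp, hi1⟩)
      exact hF (Set.Countable.mono hsub
        ((Set.Countable.biUnion (p₀.1 : Set ι).to_countable fun α _ => hall α).insert p₀))
    obtain ⟨α, hα⟩ := hα
    -- one of the two values occurs uncountably often
    have hsplit : {p ∈ F | α ∈ p.1} ⊆
        {p ∈ F | α ∈ p.1 ∧ p.2 α = true} ∪ {p ∈ F | α ∈ p.1 ∧ p.2 α = false} := by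
      intro p hp
      rcases Bool.eq_false_or_eq_true (p.2 α) with h | h
      · exact Or.inl ⟨hp.1, hp.2, h⟩
      · exact Or.inr ⟨hp.1, hp.2, h⟩

    have hb : ∃ b : Bool, ¬ ({p ∈ F | α ∈ p.1 ∧ p.2 α = b}).Countable := by
      by_contra hboth
      push_neg at hboth
      exact hα (Set.Countable.mono hsplit ((hboth true).union (hboth false)))
    obtain ⟨b, hb⟩ := hb
    set G := {p ∈ F | α ∈ p.1 ∧ p.2 α = b} with hGdef
    -- erase α
    have hinj : Set.InjOn (fun p : Finset ι × (ι → Bool) => (p.1.erase α, p.2)) G := by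
      intro p hp q hq h
      simp only [Prod.mk.injEq] at h
      obtain ⟨h1, h2⟩ := h
      have : p.1 = q.1 := by
        rw [← Finset.insert_erase hp.2.1, ← Finset.insert_erase hq.2.1, h1]
      exact Prod.ext this h2
    have himg : ((fun p : Finset ι × (ι → Bool) => (p.1.erase α, p.2)) '' G).Countable := by
      apply ih
      · rintro q ⟨p, hp, rfl⟩
        have := hcard p hp.1
        rw [Finset.card_erase_of_mem hp.2.1]
        omega
      · rintro q₁ ⟨p₁, hp₁, rfl⟩ q₂ ⟨p₂, hp₂, rfl⟩ hne
        have hpne : p₁ ≠ p₂ := fun h => hne (by rw [h])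
        obtain ⟨i, hi1, hi2, hiv⟩ := hpair hp₁.1 hp₂.1 hpne
        have hiα : i ≠ α := by
          rintro rfl
          exact hiv (hp₁.2.2.trans hp₂.2.2.symm)
        exact ⟨i, Finset.mem_erase.mpr ⟨hiα, hi1⟩,
          Finset.mem_erase.mpr ⟨hiα, hi2⟩, hiv⟩
    exact hb (Set.countable_of_injective_of_countable_image hinj himg)

theorem sigmaProd_ccc (ι : Type u) (𝒰 : Set (Set (SigmaProd ι)))
    (hop : ∀ U ∈ 𝒰, IsOpen U ∧ U.Nonempty) (hdisj : 𝒰.PairwiseDisjoint id) :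
    𝒰.Countable := by
  classical
  -- to each U assign a condition whose cylinder (within Σ) is inside U
  have key : ∀ U ∈ 𝒰, ∃ p : Finset ι × (ι → Bool),
      ∀ y : SigmaProd ι, (∀ a ∈ p.1, y.val a = p.2 a) → y ∈ U := by
    intro U hU
    have hUo := (hop U hU).1
    obtain ⟨x, hx⟩ := (hop U hU).2
    obtain ⟨V, hVo, hVU⟩ := isOpen_induced_iff.mp hUo
    have hxV : x.val ∈ V := by rw [← hVU] at hx; exact hx
    obtain ⟨I, u, hu, hsub⟩ := isOpen_pi_iff.mp hVo x.val hxV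
    refine ⟨(I, x.val), fun y hy => ?_⟩
    have : y.val ∈ V := hsub (fun a ha => by rw [hy a ha]; exact (hu a ha).2)
    rw [← hVU]; exact this
  choose! g hg using key
  -- for distinct members the conditions are incompatible
  have hinc : ∀ U ∈ 𝒰, ∀ U' ∈ 𝒰, U ≠ U' → Incomp (g U) (g U') := by
    intro U hU U' hU' hne
    by_contra hcomp
    have hagree : ∀ i, i ∈ (g U).1 → i ∈ (g U').1 → (g U).2 i = (g U').2 i := by
      intro i h1 h2
      by_contra hne'
      exact hcomp ⟨i, h1, h2, hne'⟩
    set z : ι → Bool := fun i =>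
      if i ∈ (g U).1 then (g U).2 i else if i ∈ (g U').1 then (g U').2 i else false with hz
    have hzc : {i : ι | z i = true}.Countable := by
      apply Set.Countable.mono _ (((g U).1 ∪ (g U').1 : Finset ι) : Set ι).to_countable
      intro i hi
      simp only [mem_setOf_eq, hz] at hi
      by_cases h1 : i ∈ (g U).1
      · simp [h1]
      · by_cases h2 : i ∈ (g U').1
        · simp [h2]
        · simp [h1, h2] at hi
    set zz : SigmaProd ι := ⟨z, hzc⟩ with hzz
    have hzU : zz ∈ U := hg U hU zz (fun a ha => by simp [hzz, hz, ha])
    have hzU' : zz ∈ U' := by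
      apply hg U' hU' zz
      intro a ha
      by_cases h1 : a ∈ (g U).1
      · simp only [hzz, hz]
        rw [if_pos h1]
        exact hagree a h1 ha
      · simp [hzz, hz, h1, ha]
    exact Set.disjoint_left.mp (hdisj hU hU' hne) hzU hzU'
  have ginj : Set.InjOn g 𝒰 := by
    intro U hU U' hU' h
    by_contra hne
    obtain ⟨i, -, -, hiv⟩ := hinc U hU U' hU' hne
    rw [h] at hiv
    exact hiv rfl
  apply Set.countable_of_injective_of_countable_image ginj
  have : g '' 𝒰 = ⋃ n : ℕ, {p ∈ g '' 𝒰 | p.1.card = n} := by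
    ext p
    simp only [Set.mem_iUnion, mem_setOf_eq]
    exact ⟨fun h => ⟨p.1.card, h, rfl⟩, fun ⟨n, h, _⟩ => h⟩
  rw [this]
  apply Set.countable_iUnion
  intro n
  apply antichain_countable n
  · exact fun p hp => le_of_eq hp.2
  · rintro p ⟨⟨U, hU, rfl⟩, -⟩ q ⟨⟨U', hU', rfl⟩, -⟩ hne
    exact hinc U hU U' hU' (fun h => hne (by rw [h]))

theorem t35_subtype {X : Type u} [TopologicalSpace X] [T35Space X] (p : X → Prop) :
    T35Space {x // p x} := by
  have : CompletelyRegularSpace {x // p x} := by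
    refine ⟨fun x K hK hxK => ?_⟩
    obtain ⟨C, hC, rfl⟩ := isClosed_induced_iff.mp hK
    obtain ⟨f, hf, hf0, hf1⟩ :=
      CompletelyRegularSpace.completely_regular (x : X) C hC hxK
    exact ⟨f ∘ Subtype.val, hf.comp continuous_subtype_val, hf0, fun k hk => hf1 hk⟩
  constructor

theorem sigmaProd_cc (ι : Type u) (U : ℕ → Set (SigmaProd ι)) (hop : ∀ n, IsOpen (U n))
    (hcov : (⋃ n, U n) = Set.univ) : ∃ F : Finset ℕ, (⋃ n ∈ F, U n) = Set.univ := by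
  by_contra hF
  push_neg at hF
  have hpt : ∀ n : ℕ, ∃ x : SigmaProd ι, x ∉ ⋃ k ∈ Finset.range (n + 1), U k := by
    intro n
    obtain ⟨x, hx⟩ := Set.ne_univ_iff_exists_notMem _ |>.mp (hF (Finset.range (n + 1)))
    exact ⟨x, hx⟩
  choose x hx using hpt
  set T : Set (ι → Bool) := closure (Set.range fun n => (x n).val) with hT
  have hTc : IsCompact T := isClosed_closure.isCompact
  have hTsub : ∀ z ∈ T, {i : ι | z i = true}.Countable := by
    intro z hz
    apply Set.Countable.mono _ (Set.countable_iUnion fun n => (x n).2)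
    intro i hi
    have hop' : IsOpen {w : ι → Bool | w i = true} := by
      have : {w : ι → Bool | w i = true} = (fun w : ι → Bool => w i) ⁻¹' {true} := rfl
      rw [this]
      exact (show Continuous fun w : ι → Bool => w i from continuous_apply i).isOpen_preimage
        ({true} : Set Bool) (isOpen_discrete _)
    obtain ⟨w, hw1, n, rfl⟩ := mem_closure_iff.mp hz _ hop' hi
    exact Set.mem_iUnion.mpr ⟨n, hw1⟩
  set K : Set (SigmaProd ι) := Subtype.val ⁻¹' T with hK
  have hKc : IsCompact K := by
    refine (Topology.IsEmbedding.subtypeVal.isCompact_iff (f := (Subtype.val : SigmaProd ι → ι → Bool))).mpr ?_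
    have : Subtype.val '' K = T := by
      ext z
      constructor
      · rintro ⟨w, hw, rfl⟩
        exact hw
      · intro hz
        exact ⟨⟨z, hTsub z hz⟩, hz, rfl⟩
    rwa [this]
  obtain ⟨t, ht⟩ := hKc.elim_finite_subcover U hop (by rw [hcov]; exact Set.subset_univ _)
  set N := t.sup id with hN
  have hxK : x N ∈ K := subset_closure ⟨N, rfl⟩
  obtain ⟨k, hk, hxk⟩ := Set.mem_iUnion₂.mp (ht hxK)
  exact hx N (Set.mem_biUnion (Finset.mem_range.mpr (Nat.lt_succ_of_le (Finset.le_sup (f := id) hk))) hxk)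


abbrev Om : Type u := (Cardinal.aleph 1 : Cardinal.{u}).ord.ToType

section
variable {ι : Type u} (g : Om.{u} ↪ ι)

open Classical in
/-- characteristic function of the image of an initial segment -/
noncomputable def chi (α : Om.{u}) : ι → Bool := fun i =>
  if (∃ β : Om.{u}, β < α ∧ g β = i) then true else false

lemma chi_eq_true {α : Om.{u}} {i : ι} :
    chi g α i = true ↔ ∃ β : Om.{u}, β < α ∧ g β = i := by
  classical
  by_cases h : ∃ β : Om.{u}, β < α ∧ g β = i <;> simp [chi, h]

lemma chi_apply_g {α β : Om.{u}} : chi g α (g β) = true ↔ β < α := by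
  rw [chi_eq_true]
  constructor
  · rintro ⟨β', hβ', hg⟩
    rwa [← g.injective hg]
  · exact fun h => ⟨β, h, rfl⟩

lemma chi_countable (α : Om.{u}) : {i : ι | chi g α i = true}.Countable := by
  apply Set.Countable.mono _ ((omega1_initialSeg_countable α).image g)
  intro i hi
  obtain ⟨β, hβ, rfl⟩ := (chi_eq_true g).mp hi
  exact ⟨β, hβ, rfl⟩

/-- the point of the Σ-product corresponding to `α < ω₁` -/
noncomputable def pt (α : Om.{u}) : SigmaProd ι := ⟨chi g α, chi_countable g α⟩

/-- basic open sets -/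
lemma isOpen_coord (i : ι) (b : Bool) : IsOpen {z : SigmaProd ι | z.val i = b} := by
  have : {z : SigmaProd ι | z.val i = b}
      = Subtype.val ⁻¹' ((fun w : ι → Bool => w i) ⁻¹' {b}) := rfl
  rw [this]
  exact ((show Continuous fun w : ι → Bool => w i from continuous_apply i).comp
    continuous_subtype_val).isOpen_preimage _ (isOpen_discrete _)

lemma closed_copy : IsClosed (Set.range (pt g)) := by
  rw [← isOpen_compl_iff]
  rw [isOpen_iff_forall_mem_open]
  intro y hy
  by_cases h1 : ∃ i : ι, (¬ ∃ β : Om.{u}, g β = i) ∧ y.val i = true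
  · obtain ⟨i, hi, hyi⟩ := h1
    refine ⟨{z : SigmaProd ι | z.val i = true}, ?_, isOpen_coord i true, hyi⟩
    rintro z hz ⟨α, rfl⟩
    obtain ⟨β, -, hβ⟩ := (chi_eq_true g).mp hz
    exact hi ⟨β, hβ⟩
  by_cases h2 : ∃ β β' : Om.{u}, β' < β ∧ y.val (g β) = true ∧ y.val (g β') ≠ true
  · obtain ⟨β, β', hlt, hβ, hβ'⟩ := h2
    refine ⟨{z : SigmaProd ι | z.val (g β) = true} ∩ {z : SigmaProd ι | z.val (g β') = false},
      ?_, (isOpen_coord _ _).inter (isOpen_coord _ _), hβ, by simpa using hβ'⟩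
    rintro z ⟨hz1, hz2⟩ ⟨α, rfl⟩
    have hβα : β < α := (chi_apply_g g).mp hz1
    have h3 : chi g α (g β') = true := (chi_apply_g g).mpr (hlt.trans hβα)
    have hz2' : chi g α (g β') = false := hz2
    rw [hz2'] at h3
    exact Bool.false_ne_true h3
  -- otherwise y is itself a point of the copy: contradiction
  exfalso
  push_neg at h1 h2
  set A : Set (Om.{u}) := {β | y.val (g β) = true} with hA
  have hAc : A.Countable := y.2.preimage g.injective
  have hAinit : ∀ β ∈ A, ∀ β', β' < β → β' ∈ A := by
    intro β hβ β' hβ'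
    by_contra hmem
    exact hmem (h2 β β' hβ' hβ)
  obtain ⟨γ, hγ⟩ := omega1_strict_ub hAc
  have hγA : γ ∉ A := fun h => lt_irrefl γ (hγ γ h)
  have hne : (Aᶜ : Set (Om.{u})).Nonempty := ⟨γ, hγA⟩
  set α₀ := (wellFounded_lt (α := Om.{u})).min Aᶜ hne with hα₀
  have hα₀A : α₀ ∉ A := (wellFounded_lt (α := Om.{u})).min_mem Aᶜ hne
  have hiff : ∀ β : Om.{u}, β ∈ A ↔ β < α₀ := by
    intro β
    constructor
    · intro hβ
      rcases lt_trichotomy β α₀ with h | h | h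
      · exact h
      · exact absurd (h ▸ hβ) hα₀A
      · exact absurd (hAinit β hβ α₀ h) hα₀A
    · intro hβ
      by_contra hmem
      exact (wellFounded_lt (α := Om.{u})).not_lt_min Aᶜ hmem hβ
  apply hy
  refine ⟨α₀, ?_⟩
  apply Subtype.ext
  funext i
  rw [Bool.eq_iff_iff]
  by_cases hi : ∃ β : Om.{u}, g β = i
  · obtain ⟨β, rfl⟩ := hi
    show chi g α₀ (g β) = true ↔ _
    rw [chi_apply_g]
    exact ((hiff β).symm : (β < α₀ ↔ y.val (g β) = true))
  · constructor
    · intro h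
      obtain ⟨β, -, hβ⟩ := (chi_eq_true g).mp h
      exact absurd ⟨β, hβ⟩ hi
    · intro h
      exact absurd h (h1 i (fun β hβ => hi ⟨β, hβ⟩))

lemma pt_mem_V {α β : Om.{u}} :
    pt g β ∈ ({z : SigmaProd ι | z.val (g α) = false} ∪ (Set.range (pt g))ᶜ) ↔ β ≤ α := by
  constructor
  · rintro (hz | hz)
    · have : chi g β (g α) = false := hz
      by_contra hlt
      rw [(chi_apply_g g).mpr (lt_of_not_ge hlt)] at this
      simp at this
    · exact absurd ⟨β, rfl⟩ hz
  · intro hle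
    left
    show chi g β (g α) = false
    rw [← Bool.not_eq_true, chi_apply_g]
    exact not_lt.mpr hle

end

theorem sigmaProd_not_linLindelof {ι : Type u} (h : Cardinal.aleph 1 < #ι) :
    ¬ (∀ 𝒰 : Set (Set (SigmaProd ι)), (∀ U ∈ 𝒰, IsOpen U) → IsChain (· ⊆ ·) 𝒰 →
      ⋃₀ 𝒰 = Set.univ → ∃ 𝒱 ⊆ 𝒰, 𝒱.Countable ∧ ⋃₀ 𝒱 = Set.univ) := by
  intro hLL
  have hle : #(Om.{u}) ≤ #ι := by
    rw [Cardinal.mk_ord_toType]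
    exact h.le
  obtain ⟨g⟩ := (Cardinal.le_def (Om.{u}) ι).mp hle
  have hne : Nonempty (Om.{u}) := omega1_nonempty
  set V : Om.{u} → Set (SigmaProd ι) :=
    fun α => {z : SigmaProd ι | z.val (g α) = false} ∪ (Set.range (pt g))ᶜ with hV
  have hVopen : ∀ α, IsOpen (V α) := fun α =>
    (isOpen_coord (g α) false).union (closed_copy g).isOpen_compl
  have hVmono : ∀ α α' : Om.{u}, α ≤ α' → V α ⊆ V α' := by
    intro α α' hle' z hz
    by_cases hzC : z ∈ Set.range (pt g)
    · obtain ⟨β, rfl⟩ := hzC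
      have hβ : β ≤ α := (pt_mem_V g).mp hz
      exact (pt_mem_V g).mpr (hβ.trans hle')
    · exact Or.inr hzC
  have hchain : IsChain (· ⊆ ·) (Set.range V) := by
    rintro _ ⟨α, rfl⟩ _ ⟨α', rfl⟩ -
    rcases le_total α α' with hc | hc
    · exact Or.inl (hVmono α α' hc)
    · exact Or.inr (hVmono α' α hc)
  have hcover : ⋃₀ (Set.range V) = Set.univ := by
    apply Set.eq_univ_of_forall
    intro z
    by_cases hzC : z ∈ Set.range (pt g)
    · obtain ⟨β, rfl⟩ := hzC
      exact ⟨V β, ⟨β, rfl⟩, (pt_mem_V g).mpr le_rfl⟩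
    · exact ⟨V (Classical.arbitrary _), ⟨_, rfl⟩, Or.inr hzC⟩
  obtain ⟨𝒱, h𝒱sub, h𝒱c, h𝒱cov⟩ := hLL (Set.range V) (by rintro _ ⟨α, rfl⟩; exact hVopen α)
    hchain hcover
  choose c hc using fun (W : ↥𝒱) => h𝒱sub W.2
  have : Countable ↥𝒱 := h𝒱c.to_subtype
  obtain ⟨γ, hγ⟩ := omega1_strict_ub (Set.countable_range c)
  have hγmem : pt g γ ∈ ⋃₀ 𝒱 := by rw [h𝒱cov]; trivial
  obtain ⟨W, hW, hWmem⟩ := hγmem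
  have hαγ : c ⟨W, hW⟩ < γ := hγ _ ⟨⟨W, hW⟩, rfl⟩
  have : pt g γ ∈ V (c ⟨W, hW⟩) := by rw [hc ⟨W, hW⟩]; exact hWmem
  have := (pt_mem_V g).mp this
  exact absurd hαγ (not_lt.mpr this)


/-- for any infinite `κ = #ι`, the Σ-product `Σ(2^κ)` is a countably
compact ccc Tychonoff space; for `κ > ℵ₁` it is cellular-Lindelöf but not linearly
Lindelöf. -/
theorem stmt11 (ι : Type u) [Infinite ι] :
    CountablyCompactSpace' (SigmaProd ι) ∧
    (∀ 𝒰 : Set (Set (SigmaProd ι)), IsCellularFamily 𝒰 → 𝒰.Countable) ∧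
    T35Space (SigmaProd ι) ∧
    (Cardinal.aleph 1 < #ι →
      CellularLindelof (SigmaProd ι) ∧ ¬ LinearlyLindelofSpace (SigmaProd ι)) := by
  refine ⟨sigmaProd_cc ι, fun 𝒰 h => sigmaProd_ccc ι 𝒰 h.1 h.2, t35_subtype _, fun hκ => ⟨?_, ?_⟩⟩
  · intro 𝒰 hcell
    have hct := sigmaProd_ccc ι 𝒰 hcell.1 hcell.2
    have hpick : ∀ U : ↥𝒰, ∃ x, x ∈ U.1 := fun U => (hcell.1 U.1 U.2).2
    choose f hf using hpick
    have : Countable ↥𝒰 := hct.to_subtype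
    exact ⟨Set.range f, (Set.countable_range f).isLindelof,
      fun U hU => ⟨f ⟨U, hU⟩, hf ⟨U, hU⟩, ⟨⟨U, hU⟩, rfl⟩⟩⟩
  · exact sigmaProd_not_linLindelof hκ
end

section
/- In the Katětov extension K(ω), every θ-free sequence has cardinality at most 𝔠; hence F_θ(K(ω)) ≤ 𝔠 while F(K(ω)) = 2^𝔠, so F_θ(X) < F(X) can hold for a Urysohn space X. -/
open Cardinal Set Topology

universe u

/-- The topology of the Katětov extension `K(ω)` on the set of ultrafilters on `ω`. -/
def katetovTop : TopologicalSpace (Ultrafilter ℕ) :=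
  TopologicalSpace.generateFrom
    {S | (∃ n : ℕ, S = {(pure n : Ultrafilter ℕ)}) ∨
      ∃ (p : Ultrafilter ℕ) (A : Set ℕ), A ∈ p ∧
        S = insert p ((fun n : ℕ => (pure n : Ultrafilter ℕ)) '' A)}

namespace Stmt13Aux

open Filter TopologicalSpace

attribute [local instance 2000] katetovTop

/-- shorthand for principal ultrafilters -/
noncomputable abbrev pu : ℕ → Ultrafilter ℕ := fun n => (pure n : Ultrafilter ℕ)

/-- the generating family of the Katětov topology -/
def bs : Set (Set (Ultrafilter ℕ)) :=
  {S | (∃ n : ℕ, S = {(pure n : Ultrafilter ℕ)}) ∨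
    ∃ (p : Ultrafilter ℕ) (A : Set ℕ), A ∈ p ∧
      S = insert p ((fun n : ℕ => (pure n : Ultrafilter ℕ)) '' A)}

lemma katetovTop_eq : katetovTop = TopologicalSpace.generateFrom bs := rfl

lemma eq_pure_of_singleton_mem {r : Ultrafilter ℕ} {n : ℕ}
    (h : ({n} : Set ℕ) ∈ r) : r = pu n := by
  refine Ultrafilter.ext fun s => ⟨fun hs => ?_, fun hs => ?_⟩
  · obtain ⟨m, hm, hm'⟩ := Ultrafilter.nonempty_of_mem (inter_mem h hs)
    exact Ultrafilter.mem_pure.2 (by rwa [Set.mem_singleton_iff.1 hm] at hm')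
  · exact mem_of_superset h
      (Set.singleton_subset_iff.2 (Ultrafilter.mem_pure.1 hs))

lemma isBasis : IsTopologicalBasis bs := by
  refine ⟨?_, ?_, rfl⟩
  · rintro t₁ h₁ t₂ h₂ x ⟨hx₁, hx₂⟩
    by_cases hp : ∃ n, x = pu n
    · obtain ⟨n, rfl⟩ := hp
      exact ⟨{pu n}, Or.inl ⟨n, rfl⟩, rfl,
        Set.singleton_subset_iff.2 ⟨hx₁, hx₂⟩⟩
    · have key : ∀ t ∈ bs, x ∈ t → ∃ A : Set ℕ, A ∈ x ∧
          insert x ((fun n : ℕ => (pure n : Ultrafilter ℕ)) '' A) ⊆ t := by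
        rintro t (⟨n, rfl⟩ | ⟨p, A, hA, rfl⟩) hx
        · exact absurd ⟨n, hx⟩ hp
        · rcases hx with rfl | ⟨m, _, rfl⟩
          · exact ⟨A, hA, subset_rfl⟩
          · exact absurd ⟨m, rfl⟩ hp
      obtain ⟨A₁, hA₁, hs₁⟩ := key t₁ h₁ hx₁
      obtain ⟨A₂, hA₂, hs₂⟩ := key t₂ h₂ hx₂
      refine ⟨insert x ((fun n : ℕ => (pure n : Ultrafilter ℕ)) '' (A₁ ∩ A₂)),
        Or.inr ⟨x, A₁ ∩ A₂, inter_mem hA₁ hA₂, rfl⟩, Set.mem_insert _ _, ?_⟩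
      refine Set.subset_inter ?_ ?_
      · exact (Set.insert_subset_insert
          (Set.image_mono Set.inter_subset_left)).trans hs₁
      · exact (Set.insert_subset_insert
          (Set.image_mono Set.inter_subset_right)).trans hs₂
  · refine Set.eq_univ_iff_forall.2 fun x => Set.mem_sUnion.2 ?_
    by_cases hp : ∃ n, x = pu n
    · obtain ⟨n, rfl⟩ := hp
      exact ⟨{pu n}, Or.inl ⟨n, rfl⟩, rfl⟩
    · exact ⟨insert x ((fun n : ℕ => (pure n : Ultrafilter ℕ)) '' Set.univ),
        Or.inr ⟨x, Set.univ, univ_mem, rfl⟩, Set.mem_insert _ _⟩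

lemma isOpen_setOf_mem (A : Set ℕ) : IsOpen {r : Ultrafilter ℕ | A ∈ r} := by
  refine isBasis.isOpen_iff.2 fun r hr =>
    ⟨insert r ((fun n : ℕ => (pure n : Ultrafilter ℕ)) '' A),
      Or.inr ⟨r, A, hr, rfl⟩, Set.mem_insert _ _, ?_⟩
  rintro y (rfl | ⟨m, hm, rfl⟩)
  · exact hr
  · exact Ultrafilter.mem_pure.2 hm

lemma isClosed_setOf_mem (A : Set ℕ) : IsClosed {r : Ultrafilter ℕ | A ∈ r} := by
  rw [← isOpen_compl_iff]
  have h : {r : Ultrafilter ℕ | A ∈ r}ᶜ = {r : Ultrafilter ℕ | Aᶜ ∈ r} := by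
    ext r
    simp [Set.mem_setOf_eq, Ultrafilter.compl_mem_iff_notMem]
  rw [h]
  exact isOpen_setOf_mem _

lemma setOf_mem_subset_closure (A : Set ℕ) :
    {r : Ultrafilter ℕ | A ∈ r} ⊆
      closure ((fun n : ℕ => (pure n : Ultrafilter ℕ)) '' A) := by
  intro r hr
  rw [isBasis.mem_closure_iff]
  rintro t (⟨n, rfl⟩ | ⟨p, C, hC, rfl⟩) hrt
  · have hrn : r = pu n := hrt
    rw [hrn] at hr
    exact ⟨pu n, rfl, ⟨n, Ultrafilter.mem_pure.1 hr, rfl⟩⟩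
  · rcases hrt with rfl | ⟨m, hm, rfl⟩
    · obtain ⟨m, hmC, hmA⟩ := Ultrafilter.nonempty_of_mem (inter_mem hC hr)
      exact ⟨pu m, Set.mem_insert_of_mem _ ⟨m, hmC, rfl⟩, ⟨m, hmA, rfl⟩⟩
    · exact ⟨pu m, Set.mem_insert_of_mem _ ⟨m, hm, rfl⟩,
        ⟨m, Ultrafilter.mem_pure.1 hr, rfl⟩⟩

lemma isClosed_of_free {E : Set (Ultrafilter ℕ)}
    (hE : ∀ x ∈ E, ∀ n : ℕ, x ≠ pu n) : IsClosed E := by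
  rw [← isOpen_compl_iff, isBasis.isOpen_iff]
  intro x hx
  by_cases hp : ∃ n, x = pu n
  · obtain ⟨n, rfl⟩ := hp
    refine ⟨{pu n}, Or.inl ⟨n, rfl⟩, rfl, ?_⟩
    rintro y (rfl : y = pu n)
    exact hx
  · refine ⟨insert x ((fun n : ℕ => (pure n : Ultrafilter ℕ)) '' Set.univ),
      Or.inr ⟨x, Set.univ, univ_mem, rfl⟩, Set.mem_insert _ _, ?_⟩
    rintro y (rfl | ⟨m, _, rfl⟩)
    · exact hx
    · exact fun hy => hE _ hy m rfl

lemma thetaCl_subset_thetaClosure {A : Set (Ultrafilter ℕ)} :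
    thetaCl A ⊆ thetaClosure A := by
  intro x hx
  rintro B ⟨hAB, hB⟩
  rw [← hB]
  intro U hU hxU
  obtain ⟨y, hy, hyA⟩ := hx U hU hxU
  exact ⟨y, hy, hAB hyA⟩

lemma exists_sep {x : Ultrafilter ℕ} {E : Set (Ultrafilter ℕ)}
    (h : x ∉ thetaCl E) :
    ∃ A : Set ℕ, A ∈ x ∧ ∀ r : Ultrafilter ℕ, A ∈ r → r ∉ E := by
  simp only [thetaCl, Set.mem_setOf_eq, not_forall] at h
  obtain ⟨U, hU, hxU, hne⟩ := h
  have hdisj : ∀ y ∈ closure U, y ∉ E := fun y hy hyE => hne ⟨y, hy, hyE⟩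
  obtain ⟨t, ht, hxt, htU⟩ := isBasis.isOpen_iff.1 hU x hxU
  rcases ht with ⟨n, rfl⟩ | ⟨p, C, hC, rfl⟩
  · have hx : x = pu n := hxt
    refine ⟨{n}, by rw [hx]; exact Ultrafilter.mem_pure.2 rfl, fun r hr hrE => ?_⟩
    have hrn : r = pu n := eq_pure_of_singleton_mem hr
    rw [hrn, ← hx] at hrE
    exact hdisj x (subset_closure hxU) hrE
  · rcases hxt with rfl | ⟨m, hm, rfl⟩
    · refine ⟨C, hC, fun r hr hrE => ?_⟩
      have h1 : r ∈ closure U :=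
        closure_mono (fun y hy => htU (Set.mem_insert_of_mem _ hy))
          (setOf_mem_subset_closure C hr)
      exact hdisj r h1 hrE
    · refine ⟨{m}, Ultrafilter.mem_pure.2 rfl, fun r hr hrE => ?_⟩
      have hrm : r = pu m := eq_pure_of_singleton_mem hr
      rw [hrm] at hrE
      exact hdisj _ (subset_closure hxU) hrE

/-! ### Part 1 : θ-free sequences have length at most 𝔠 -/

lemma part1 (ι : Type) [LinearOrder ι] (f : ι → Ultrafilter ℕ)
    (hf : IsThetaFreeSeq f) : #ι ≤ Cardinal.continuum := by
  have key : ∀ i : ι, ∃ A : Set ℕ, A ∈ f i ∧ ∀ j : ι, j < i → A ∉ f j := by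
    intro i
    have h1 : f i ∉ thetaClosure (f '' {j | j < i}) := by
      intro hmem
      have h2 : f i ∈ closure (f '' {j | i ≤ j}) :=
        subset_closure ⟨i, le_refl i, rfl⟩
      have h3 := hf i
      rw [Set.eq_empty_iff_forall_notMem] at h3
      exact h3 (f i) ⟨hmem, h2⟩
    have h1' : f i ∉ thetaCl (f '' {j | j < i}) :=
      fun h => h1 (thetaCl_subset_thetaClosure h)
    obtain ⟨A, hA, hsep⟩ := exists_sep h1'
    exact ⟨A, hA, fun j hj hAj => hsep (f j) hAj ⟨j, hj, rfl⟩⟩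
  choose g hg1 hg2 using key
  have ginj : Function.Injective g := by
    intro i j hij
    rcases lt_trichotomy i j with h | h | h
    · exact absurd (hij ▸ hg1 i) (hg2 j i h)
    · exact h
    · exact absurd (hij.symm ▸ hg1 j) (hg2 i j h)
  calc #ι ≤ #(Set ℕ) := Cardinal.mk_le_of_injective ginj
    _ = 2 ^ (ℵ₀ : Cardinal) := by rw [Cardinal.mk_set, Cardinal.mk_nat]
    _ = Cardinal.continuum := Cardinal.two_power_aleph0

/-! ### Part 2 : a free sequence of length 2 ^ 𝔠 -/

/-- The countable base set for the independent-family construction. -/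
abbrev Sig : Type := Finset ℕ × Finset (Finset ℕ)

/-- the "independent" subsets of `Sig` indexed by subsets of `ℕ` -/
def AX (X : Set ℕ) : Set Sig := {z | ∃ G ∈ z.2, (G : Set ℕ) = ↑z.1 ∩ X}

/-- the generating family of the filter associated to `f : Set ℕ → Prop` -/
def Gfam (f : Set ℕ → Prop) : Set (Set Sig) :=
  {s | ∃ X : Set ℕ, (f X ∧ s = AX X) ∨ (¬ f X ∧ s = (AX X)ᶜ)}

open Classical in
/-- a function picking a point in the symmetric difference of two sets -/
noncomputable def wit (Y Y' : Set ℕ) : ℕ :=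
  if h : ((Y \ Y') ∪ (Y' \ Y)).Nonempty then h.choose else 0

lemma wit_spec {Y Y' : Set ℕ} (h : Y ≠ Y') :
    wit Y Y' ∈ (Y \ Y') ∪ (Y' \ Y) := by
  have hne : ((Y \ Y') ∪ (Y' \ Y)).Nonempty := by
    by_contra hc
    rw [Set.not_nonempty_iff_eq_empty, Set.union_empty_iff] at hc
    exact h (Set.Subset.antisymm
      (fun n hn => by_contra fun hn' => (Set.eq_empty_iff_forall_notMem.1 hc.1 n) ⟨hn, hn'⟩)
      (fun n hn => by_contra fun hn' => (Set.eq_empty_iff_forall_notMem.1 hc.2 n) ⟨hn, hn'⟩))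
  classical
  rw [wit, dif_pos hne]
  exact hne.choose_spec

lemma generate_neBot (f : Set ℕ → Prop) : NeBot (Filter.generate (Gfam f)) := by
  rw [Filter.generate_neBot_iff]
  intro t hts htfin
  classical
  -- choose an index for every member of `t`
  have hch : ∀ s ∈ t, ∃ X : Set ℕ, (f X ∧ s = AX X) ∨ (¬ f X ∧ s = (AX X)ᶜ) :=
    fun s hs => hts hs
  choose ch hch' using hch
  set 𝒮 : Set (Set ℕ) := {Y | ∃ s, ∃ hs : s ∈ t, ch s hs = Y} with h𝒮
  have h𝒮fin : 𝒮.Finite := htfin.dependent_image ch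
  -- a finite separating set
  set F₀ : Set ℕ := Set.image2 wit 𝒮 𝒮 with hF₀
  have hF₀fin : F₀.Finite := Set.Finite.image2 _ h𝒮fin h𝒮fin
  have hsep : ∀ Y ∈ 𝒮, ∀ Y' ∈ 𝒮, Y ≠ Y' → F₀ ∩ Y ≠ F₀ ∩ Y' := by
    intro Y hY Y' hY' hne heq
    have hw : wit Y Y' ∈ F₀ := Set.mem_image2_of_mem hY hY'
    rcases wit_spec hne with ⟨h1, h2⟩ | ⟨h1, h2⟩
    · have : wit Y Y' ∈ F₀ ∩ Y' := heq ▸ ⟨hw, h1⟩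
      exact h2 this.2
    · have : wit Y Y' ∈ F₀ ∩ Y := heq.symm ▸ ⟨hw, h1⟩
      exact h2 this.2
  set Fn : Finset ℕ := hF₀fin.toFinset with hFn
  have hFncoe : (Fn : Set ℕ) = F₀ := hF₀fin.coe_toFinset
  -- the second coordinate
  set 𝒜set : Set (Finset ℕ) := {G | ∃ Y ∈ 𝒮, f Y ∧ (G : Set ℕ) = ↑Fn ∩ Y} with h𝒜
  have h𝒜fin : 𝒜set.Finite := by
    have himg : (fun G : Finset ℕ => (G : Set ℕ)) '' 𝒜set ⊆
        (fun Y : Set ℕ => (↑Fn ∩ Y : Set ℕ)) '' 𝒮 := by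
      rintro S ⟨G, ⟨Y, hY, _, hGeq⟩, rfl⟩
      exact ⟨Y, hY, hGeq.symm⟩
    exact Set.Finite.of_finite_image
      ((h𝒮fin.image _).subset himg) Finset.coe_injective.injOn
  set 𝒜 : Finset (Finset ℕ) := h𝒜fin.toFinset with h𝒜'
  refine ⟨(Fn, 𝒜), ?_⟩
  rintro s hs
  rcases hch' s hs with ⟨hfY, hseq⟩ | ⟨hfY, hseq⟩
  · -- positive generator
    rw [hseq]
    have hfin : ((Fn : Set ℕ) ∩ ch s hs).Finite := Fn.finite_toSet.inter_of_left _
    refine ⟨hfin.toFinset, ?_, by rw [hfin.coe_toFinset]⟩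
    rw [h𝒜', Set.Finite.mem_toFinset]
    exact ⟨ch s hs, ⟨s, hs, rfl⟩, hfY, by rw [hfin.coe_toFinset]⟩
  · -- negative generator
    rw [hseq]
    rintro ⟨G, hG𝒜, hGeq⟩
    rw [h𝒜', Set.Finite.mem_toFinset] at hG𝒜
    obtain ⟨Y', hY', hfY', hGeq'⟩ := hG𝒜
    have hYne : Y' ≠ ch s hs := fun h => hfY (h ▸ hfY')
    have : F₀ ∩ Y' = F₀ ∩ ch s hs := by
      rw [← hFncoe]
      exact hGeq' ▸ hGeq
    exact hsep Y' hY' (ch s hs) ⟨s, hs, rfl⟩ hYne this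

/-- the ultrafilter on `Sig` associated with `f : Set ℕ → Prop` -/
noncomputable def Uf (f : Set ℕ → Prop) : Ultrafilter Sig :=
  @Ultrafilter.of _ _ (generate_neBot f)

lemma mem_Uf_pos {f : Set ℕ → Prop} {X : Set ℕ} (h : f X) : AX X ∈ Uf f :=
  (@Ultrafilter.of_le _ _ (generate_neBot f))
    (Filter.mem_generate_of_mem ⟨X, Or.inl ⟨h, rfl⟩⟩)

lemma mem_Uf_neg {f : Set ℕ → Prop} {X : Set ℕ} (h : ¬ f X) : (AX X)ᶜ ∈ Uf f :=
  (@Ultrafilter.of_le _ _ (generate_neBot f))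
    (Filter.mem_generate_of_mem ⟨X, Or.inr ⟨h, rfl⟩⟩)

lemma Uf_inj : Function.Injective Uf := by
  intro f g h
  by_contra hfg
  have : ∃ X, ¬ (f X ↔ g X) := by
    by_contra hc
    push_neg at hc
    exact hfg (funext fun X => propext (hc X))
  obtain ⟨X, hX⟩ := this
  rcases Classical.em (f X) with hf | hf
  · have hg : ¬ g X := fun hg => hX ⟨fun _ => hg, fun _ => hf⟩
    have h1 : AX X ∈ Uf f := mem_Uf_pos hf
    have h2 : (AX X)ᶜ ∈ Uf f := h ▸ mem_Uf_neg hg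
    exact Ultrafilter.compl_mem_iff_notMem.1 h2 h1
  · have hg : g X := by
      by_contra hg
      exact hX ⟨fun h' => absurd h' hf, fun h' => absurd h' hg⟩
    have h1 : AX X ∈ Uf g := mem_Uf_pos hg
    have h2 : (AX X)ᶜ ∈ Uf g := h ▸ mem_Uf_neg hf
    exact Ultrafilter.compl_mem_iff_notMem.1 h2 h1

/-- transport to ultrafilters on `ℕ` -/
noncomputable def EU (f : Set ℕ → Prop) : Ultrafilter ℕ :=
  (Uf f).map (Denumerable.eqv Sig)

lemma EU_inj : Function.Injective EU := by
  intro f g h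
  apply Uf_inj
  apply Ultrafilter.ext
  intro s
  have key : ∀ u : Ultrafilter Sig, s ∈ u ↔
      (⇑(Denumerable.eqv Sig) '' s) ∈ u.map (Denumerable.eqv Sig) := by
    intro u
    rw [Ultrafilter.mem_map, Set.preimage_image_eq s (Denumerable.eqv Sig).injective]
  have h' : (Uf f).map (Denumerable.eqv Sig) = (Uf g).map (Denumerable.eqv Sig) := h
  rw [key (Uf f), key (Uf g), h']

lemma mk_good : #({f : Set ℕ → Prop | ∀ n : ℕ, EU f ≠ pu n} : Set (Set ℕ → Prop))
    = 2 ^ Cardinal.continuum := by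
  classical
  have hmk : #(Set ℕ → Prop) = 2 ^ Cardinal.continuum := by
    show #(Set (Set ℕ)) = _
    rw [Cardinal.mk_set, Cardinal.mk_set, Cardinal.mk_nat, Cardinal.two_power_aleph0]
  have hinf : Infinite (Set ℕ → Prop) := by
    rw [Cardinal.infinite_iff, hmk]
    exact (Cardinal.aleph0_lt_continuum.trans (Cardinal.cantor _)).le
  set Bad : Set (Set ℕ → Prop) := {f | ∃ n : ℕ, EU f = pu n} with hBad
  have hBadinj : Function.Injective (fun f : Bad => f.2.choose) := by
    rintro ⟨f, hf⟩ ⟨g, hg⟩ hfg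
    have h1 : EU f = pu hf.choose := hf.choose_spec
    have h2 : EU g = pu hg.choose := hg.choose_spec
    simp only at hfg
    rw [hfg] at h1
    exact Subtype.ext (EU_inj (h1.trans h2.symm))
  have hBadle : #Bad ≤ ℵ₀ := by
    calc #Bad ≤ #ℕ := Cardinal.mk_le_of_injective hBadinj
      _ = ℵ₀ := Cardinal.mk_nat
  have hlt : #Bad < #(Set ℕ → Prop) := by
    rw [hmk]
    exact hBadle.trans_lt (Cardinal.aleph0_lt_continuum.trans (Cardinal.cantor _))
  have hcompl : ({f : Set ℕ → Prop | ∀ n : ℕ, EU f ≠ pu n} : Set (Set ℕ → Prop))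
      = Badᶜ := by
    ext f
    simp [hBad, Set.mem_compl_iff, not_exists]
  rw [hcompl, Cardinal.mk_compl_of_infinite Bad hlt, hmk]

lemma part2 : ∃ (ι : Type) (_ : LinearOrder ι) (_ : WellFoundedLT ι)
    (f : ι → Ultrafilter ℕ), IsFreeSeq f ∧ #ι = 2 ^ Cardinal.continuum := by
  classical
  set Good : Set (Set ℕ → Prop) := {f | ∀ n : ℕ, EU f ≠ pu n} with hGood
  set ι : Type := ((2 : Cardinal) ^ Cardinal.continuum).ord.ToType with hι
  have hmkι : #ι = 2 ^ Cardinal.continuum := by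
    rw [hι, Cardinal.mk_toType, Cardinal.card_ord]
  have : Nonempty (ι ≃ Good) := Cardinal.eq.1 (by rw [hmkι, mk_good])
  obtain ⟨φ⟩ := this
  refine ⟨ι, inferInstance, inferInstance, fun i => EU ((φ i : Set ℕ → Prop)), ?_, hmkι⟩
  have hinj : Function.Injective fun i => EU ((φ i : Set ℕ → Prop)) :=
    fun i j h => φ.injective (Subtype.ext (EU_inj h))
  have hfree : ∀ i : ι, ∀ n : ℕ, EU ((φ i : Set ℕ → Prop)) ≠ pu n :=
    fun i => (φ i).2
  intro i
  have hc1 : IsClosed ((fun i => EU ((φ i : Set ℕ → Prop))) '' {j | j < i}) :=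
    isClosed_of_free (by rintro x ⟨j, _, rfl⟩ n; exact hfree j n)
  have hc2 : IsClosed ((fun i => EU ((φ i : Set ℕ → Prop))) '' {j | i ≤ j}) :=
    isClosed_of_free (by rintro x ⟨j, _, rfl⟩ n; exact hfree j n)
  rw [hc1.closure_eq, hc2.closure_eq, Set.eq_empty_iff_forall_notMem]
  rintro x ⟨⟨j₁, hj₁, he₁⟩, ⟨j₂, hj₂, he₂⟩⟩
  obtain rfl : j₁ = j₂ := hinj (he₁.trans he₂.symm)
  exact absurd (show j₁ < i from hj₁) (not_lt.2 (show i ≤ j₁ from hj₂))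

/-! ### Part 3 : K(ω) is Urysohn -/

lemma part3 (p q : Ultrafilter ℕ) (hpq : p ≠ q) :
    ∃ U V : Set (Ultrafilter ℕ), IsOpen U ∧ IsOpen V ∧ p ∈ U ∧ q ∈ V ∧
      closure U ∩ closure V = ∅ := by
  have hA : ∃ A : Set ℕ, A ∈ p ∧ Aᶜ ∈ q := by
    by_contra h
    push_neg at h
    apply hpq
    apply Ultrafilter.ext
    intro s
    constructor
    · intro hs
      by_contra hq
      exact h s hs (Ultrafilter.compl_mem_iff_notMem.2 hq)
    · intro hs
      by_contra hp
      have := h sᶜ (Ultrafilter.compl_mem_iff_notMem.2 hp)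
      rw [compl_compl] at this
      exact this hs
  obtain ⟨A, hAp, hAq⟩ := hA
  refine ⟨insert p ((fun n : ℕ => (pure n : Ultrafilter ℕ)) '' A),
    insert q ((fun n : ℕ => (pure n : Ultrafilter ℕ)) '' Aᶜ),
    isBasis.isOpen (Or.inr ⟨p, A, hAp, rfl⟩),
    isBasis.isOpen (Or.inr ⟨q, Aᶜ, hAq, rfl⟩),
    Set.mem_insert _ _, Set.mem_insert _ _, ?_⟩
  have h1 : closure (insert p ((fun n : ℕ => (pure n : Ultrafilter ℕ)) '' A))
      ⊆ {r : Ultrafilter ℕ | A ∈ r} := by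
    refine closure_minimal ?_ (isClosed_setOf_mem A)
    rintro y (rfl | ⟨m, hm, rfl⟩)
    · exact hAp
    · exact Ultrafilter.mem_pure.2 hm
  have h2 : closure (insert q ((fun n : ℕ => (pure n : Ultrafilter ℕ)) '' Aᶜ))
      ⊆ {r : Ultrafilter ℕ | Aᶜ ∈ r} := by
    refine closure_minimal ?_ (isClosed_setOf_mem Aᶜ)
    rintro y (rfl | ⟨m, hm, rfl⟩)
    · exact hAq
    · exact Ultrafilter.mem_pure.2 hm
  rw [Set.eq_empty_iff_forall_notMem]
  rintro x ⟨hx1, hx2⟩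
  exact Ultrafilter.compl_mem_iff_notMem.1 (h2 hx2) (h1 hx1)

end Stmt13Aux

/-- every θ-free sequence in `K(ω)` has cardinality at most `𝔠`
(so `F_θ(K(ω)) ≤ 𝔠`), while `K(ω)` has a free sequence of length `2^𝔠` (so
`F(K(ω)) = 2^𝔠`); moreover `K(ω)` is Urysohn, so `F_θ(X) < F(X)` can happen for a
Urysohn space `X`. -/
theorem stmt13 :
    (∀ (ι : Type) [LinearOrder ι] [WellFoundedLT ι] (f : ι → Ultrafilter ℕ),
      (@IsThetaFreeSeq _ katetovTop _ _ f) → #ι ≤ Cardinal.continuum) ∧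
    (∃ (ι : Type) (_ : LinearOrder ι) (_ : WellFoundedLT ι) (f : ι → Ultrafilter ℕ),
      (@IsFreeSeq _ katetovTop _ _ f) ∧ #ι = 2 ^ Cardinal.continuum) ∧
    (∀ p q : Ultrafilter ℕ, p ≠ q → ∃ U V : Set (Ultrafilter ℕ),
      @IsOpen _ katetovTop U ∧ @IsOpen _ katetovTop V ∧ p ∈ U ∧ q ∈ V ∧
      @closure _ katetovTop U ∩ @closure _ katetovTop V = ∅) := by
  refine ⟨fun ι _ _ f hf => Stmt13Aux.part1 ι f hf, Stmt13Aux.part2, Stmt13Aux.part3⟩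
end

section
/- Let X be a regular topological space in which every free sequence has length at most κ, and suppose some cardinal λ with κ < λ ≤ (2^κ)^+ is a caliber of X. Then X has a dense subset of cardinality at most 2^κ. -/
open Cardinal Set Topology

universe u

open Ordinal

section Stmt15Aux

variable {X : Type u} [TopologicalSpace X] [Nonempty X]
variable {ι : Type u} [LinearOrder ι] [WellFoundedLT ι]

attribute [local instance] Classical.propDecidable
set_option linter.unusedSectionVars false

/-- Accumulated point set before stage `α`. -/
noncomputable def Dset15 (κ : Cardinal.{u}) (α : ι)
    (m : ∀ β : ι, β < α → X × Set X × (Set ι → X)) : Set X :=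
  ⋃ b : {b : ι // b < α},
    insert (m b.1 b.2).1 ((m b.1 b.2).2.2 '' {E : Set ι | E ⊆ Set.Iio b.1 ∧ #E ≤ κ})

noncomputable def step15 (κ : Cardinal.{u}) (α : ι)
    (ih : ∀ β : ι, β < α → X × Set X × (Set ι → X)) : X × Set X × (Set ι → X) :=
  ⟨(if h : ∃ zV : X × Set X, IsOpen zV.2 ∧ zV.1 ∈ zV.2 ∧
        closure zV.2 ∩ closure (Dset15 κ α ih) = ∅ then h.choose
      else (Classical.arbitrary X, Set.univ)).1,
    (if h : ∃ zV : X × Set X, IsOpen zV.2 ∧ zV.1 ∈ zV.2 ∧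
        closure zV.2 ∩ closure (Dset15 κ α ih) = ∅ then h.choose
      else (Classical.arbitrary X, Set.univ)).2,
    fun E =>
      if h : ((⋂ β ∈ E, if hβ : β < α then (ih β hβ).2.1 else Set.univ) \
          closure (Dset15 κ α ih)).Nonempty then h.choose
      else Classical.arbitrary X⟩

noncomputable def master15 (κ : Cardinal.{u}) : ι → X × Set X × (Set ι → X) :=
  wellFounded_lt.fix (step15 κ)

lemma master15_eq (κ : Cardinal.{u}) (α : ι) :
    master15 (X := X) κ α = step15 κ α fun β _ => master15 κ β :=
  WellFounded.fix_eq _ _ _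

noncomputable def xpt (κ : Cardinal.{u}) (α : ι) : X := (master15 κ α).1
noncomputable def Vopen (κ : Cardinal.{u}) (α : ι) : Set X := (master15 (X := X) κ α).2.1
noncomputable def wpt (κ : Cardinal.{u}) (α : ι) : Set ι → X := (master15 κ α).2.2
noncomputable def Dpts (κ : Cardinal.{u}) (α : ι) : Set X :=
  Dset15 κ α fun β _ => master15 κ β

lemma wpt_mem_Dpts (κ : Cardinal.{u}) {β α : ι} (h : β < α) {E : Set ι}
    (hE1 : E ⊆ Set.Iio β) (hE2 : #E ≤ κ) :
    wpt (X := X) κ β E ∈ Dpts (X := X) κ α := by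
  refine Set.mem_iUnion.2 ⟨⟨β, h⟩, ?_⟩
  exact Set.mem_insert_iff.2 (Or.inr ⟨E, ⟨hE1, hE2⟩, rfl⟩)

lemma Vopen_spec (κ : Cardinal.{u}) (α : ι)
    (hex : ∃ zV : X × Set X, IsOpen zV.2 ∧ zV.1 ∈ zV.2 ∧
      closure zV.2 ∩ closure (Dpts (X := X) κ α) = ∅) :
    IsOpen (Vopen (X := X) κ α) ∧ xpt (X := X) κ α ∈ Vopen (X := X) κ α ∧
      closure (Vopen (X := X) κ α) ∩ closure (Dpts (X := X) κ α) = ∅ := by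
  have hex' : ∃ zV : X × Set X, IsOpen zV.2 ∧ zV.1 ∈ zV.2 ∧
      closure zV.2 ∩ closure (Dset15 κ α fun β _ => master15 (X := X) κ β) = ∅ := hex
  unfold xpt Vopen Dpts
  rw [master15_eq]
  dsimp only [step15]
  rw [dif_pos hex']
  exact ⟨hex'.choose_spec.1, hex'.choose_spec.2.1, hex'.choose_spec.2.2⟩

lemma wpt_spec (κ : Cardinal.{u}) (α : ι) {E : Set ι} (hE : E ⊆ Set.Iio α)
    (hne : ((⋂ β ∈ E, Vopen (X := X) κ β) \ closure (Dpts (X := X) κ α)).Nonempty) :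
    wpt (X := X) κ α E ∈ (⋂ β ∈ E, Vopen (X := X) κ β) \ closure (Dpts (X := X) κ α) := by
  have hset : (⋂ β ∈ E, if hβ : β < α then (master15 (X := X) κ β).2.1 else Set.univ)
      = ⋂ β ∈ E, Vopen (X := X) κ β :=
    Set.iInter₂_congr fun β hβ => dif_pos (hE hβ)
  have hne' : ((⋂ β ∈ E, if hβ : β < α then (master15 (X := X) κ β).2.1 else Set.univ) \
      closure (Dset15 κ α fun β _ => master15 (X := X) κ β)).Nonempty := by
    rw [hset]; exact hne
  have : wpt (X := X) κ α E ∈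
      (⋂ β ∈ E, if hβ : β < α then (master15 (X := X) κ β).2.1 else Set.univ) \
      closure (Dset15 κ α fun β _ => master15 (X := X) κ β) := by
    unfold wpt
    rw [master15_eq]
    dsimp only [step15]
    rw [dif_pos hne']
    exact hne'.choose_spec
  rw [hset] at this
  exact this

lemma Dpts_card (κ : Cardinal.{u}) (hκ : ℵ₀ ≤ κ) (α : ι) (hα : #(Set.Iio α) ≤ 2 ^ κ) :
    #(Dpts (X := X) κ α) ≤ 2 ^ κ := by
  have h2κ : ℵ₀ ≤ 2 ^ κ := hκ.trans (cantor κ).le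
  have hsub : #{b : ι // b < α} ≤ 2 ^ κ := by
    refine le_trans (le_of_eq (mk_congr (Equiv.subtypeEquivRight ?_))) hα
    intro b; simp [Set.mem_Iio]
  have hb : ∀ b : {b : ι // b < α},
      #(insert ((master15 (X := X) κ b.1).1)
        ((master15 (X := X) κ b.1).2.2 '' {E : Set ι | E ⊆ Set.Iio b.1 ∧ #E ≤ κ}) : Set X)
        ≤ 2 ^ κ := by
    intro b
    have h1 : #((master15 (X := X) κ b.1).2.2 ''
        {E : Set ι | E ⊆ Set.Iio b.1 ∧ #E ≤ κ}) ≤ 2 ^ κ := by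
      refine mk_image_le.trans ?_
      refine le_trans (mk_bounded_subset_le (Set.Iio b.1) κ) ?_
      have hmax : max #(Set.Iio b.1) ℵ₀ ≤ 2 ^ κ :=
        max_le ((mk_le_mk_of_subset (Set.Iio_subset_Iio b.2.le)).trans hα)
          h2κ
      calc max #(Set.Iio b.1) ℵ₀ ^ κ ≤ (2 ^ κ) ^ κ := power_le_power_right hmax
        _ = 2 ^ (κ * κ) := (power_mul).symm
        _ = 2 ^ κ := by rw [mul_eq_self hκ]
    refine mk_insert_le.trans ?_
    exact (add_le_add h1 le_rfl).trans (add_one_eq h2κ).le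
  calc #(Dpts (X := X) κ α)
      ≤ sum (fun b : {b : ι // b < α} =>
        #(insert ((master15 (X := X) κ b.1).1)
          ((master15 (X := X) κ b.1).2.2 '' {E : Set ι | E ⊆ Set.Iio b.1 ∧ #E ≤ κ}) : Set X)) :=
        mk_iUnion_le_sum_mk
    _ ≤ sum (fun _ : {b : ι // b < α} => 2 ^ κ) := sum_le_sum _ _ hb
    _ = #{b : ι // b < α} * 2 ^ κ := sum_const' _ _
    _ ≤ 2 ^ κ * 2 ^ κ := mul_le_mul_left hsub _
    _ = 2 ^ κ := mul_eq_self h2κ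

end Stmt15Aux

lemma mk_Iio_toType {o : Ordinal.{u}} (α : o.ToType) :
    #(Set.Iio α) = (@typein _ (· < ·) isWellOrder_lt α).card := by
  refine Eq.trans ?_ (@card_typein _ (· < ·) isWellOrder_lt α)
  exact mk_congr (Equiv.subtypeEquivRight fun b => by simp [Set.mem_Iio])

/-- if `X` is regular, every free sequence in `X` has length at most
`κ`, and some cardinal `λ` with `κ < λ ≤ (2^κ)⁺` is a caliber of `X`, then `X` has a
dense subset of cardinality at most `2^κ`. -/
theorem stmt15 {X : Type u} [TopologicalSpace X] [T1Space X] [RegularSpace X]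
    (κ : Cardinal.{u}) (hκ : ℵ₀ ≤ κ)
    (hF : ∀ (ι : Type u) [LinearOrder ι] [WellFoundedLT ι] (f : ι → X),
      IsFreeSeq f → #ι ≤ κ)
    (lam : Cardinal.{u}) (h1 : κ < lam) (h2 : lam ≤ Order.succ (2 ^ κ))
    (hcal : IsCaliber X lam) :
    ∃ D : Set X, Dense D ∧ #D ≤ 2 ^ κ := by
  rcases isEmpty_or_nonempty X with hX | hX
  · refine ⟨∅, ?_, by simp⟩
    rw [dense_iff_closure_eq, closure_empty, Set.univ_eq_empty_iff.2 hX]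
  by_contra hcon
  push_neg at hcon
  have H : ∀ A : Set X, #A ≤ 2 ^ κ → ¬ Dense A := fun A hA hD =>
    absurd hA (not_le.2 (hcon A hD))
  have h2κ : ℵ₀ ≤ 2 ^ κ := hκ.trans (cantor κ).le
  have hsep : ∀ A : Set X, #A ≤ 2 ^ κ → ∃ zV : X × Set X,
      IsOpen zV.2 ∧ zV.1 ∈ zV.2 ∧ closure zV.2 ∩ closure A = ∅ := by
    intro A hA
    have hnd : ¬ ∀ x : X, x ∈ closure A := H A hA
    push_neg at hnd
    obtain ⟨z, hz⟩ := hnd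
    have hzo : (closure A)ᶜ ∈ nhds z := (isClosed_closure.isOpen_compl).mem_nhds hz
    obtain ⟨C, hC, hCc, hCsub⟩ := exists_mem_nhds_isClosed_subset hzo
    refine ⟨(z, interior C), isOpen_interior, mem_interior_iff_mem_nhds.2 hC, ?_⟩
    have h1' : closure (interior C) ⊆ C := closure_minimal interior_subset hCc
    exact Set.eq_empty_iff_forall_notMem.2 fun w hw => (hCsub (h1' hw.1)) hw.2
  have hmkι₀ : #(lam.ord.ToType) = lam := by rw [mk_toType, card_ord]
  haveI : Nonempty lam.ord.ToType := mk_ne_zero_iff.1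
    (by rw [hmkι₀]; exact (aleph0_pos.trans_le (hκ.trans h1.le)).ne')
  have hIio : ∀ α : lam.ord.ToType, #(Set.Iio α) ≤ 2 ^ κ := by
    intro α
    have ht : @typein _ (· < ·) isWellOrder_lt α < lam.ord := typein_lt_self α
    have h3' : (@typein _ (· < ·) isWellOrder_lt α).card ≤ 2 ^ κ :=
      Order.lt_succ_iff.1 (lt_ord.1 (ht.trans_le (ord_le_ord.2 h2)))
    rw [mk_Iio_toType α]; exact h3'
  have hV : ∀ α : lam.ord.ToType, IsOpen (Vopen (X := X) κ α) ∧
      xpt (X := X) κ α ∈ Vopen (X := X) κ α ∧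
      closure (Vopen (X := X) κ α) ∩ closure (Dpts (X := X) κ α) = ∅ :=
    fun α => Vopen_spec κ α (hsep _ (Dpts_card κ hκ α (hIio α)))
  obtain ⟨S, hScard, hSne⟩ := hcal lam.ord.ToType (fun α => Vopen (X := X) κ α) hmkι₀
    (fun i => ⟨(hV i).1, ⟨xpt (X := X) κ i, (hV i).2.1⟩⟩)
  obtain ⟨p, hp⟩ := hSne
  have hpV : ∀ s ∈ S, p ∈ Vopen (X := X) κ s := fun s hs => Set.mem_iInter₂.1 hp s hs
  have hpD : ∀ s ∈ S, p ∉ closure (Dpts (X := X) κ s) := by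
    intro s hs hcl
    have hmem : p ∈ closure (Vopen (X := X) κ s) ∩ closure (Dpts (X := X) κ s) :=
      ⟨subset_closure (hpV s hs), hcl⟩
    rw [(hV s).2.2] at hmem
    exact hmem
  -- enumeration of `S`
  have hotp : (Order.succ κ).ord ≤ @type S (· < ·) isWellOrder_lt := by
    rw [ord_le]
    rw [@card_type S (· < ·) isWellOrder_lt, hScard]
    exact Order.succ_le_of_lt h1
  set eS : Ordinal.{u} → lam.ord.ToType := fun o =>
    if h : o < @type S (· < ·) isWellOrder_lt then
      ((@enum S (· < ·) isWellOrder_lt ⟨o, h⟩ : S) : lam.ord.ToType)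
    else Classical.arbitrary lam.ord.ToType with heSdef
  have heS_mem : ∀ {o : Ordinal.{u}}, o < (Order.succ κ).ord → eS o ∈ S := by
    intro o ho
    have h' := ho.trans_le hotp
    simp only [heSdef, dif_pos h']
    exact (@enum S (· < ·) isWellOrder_lt ⟨o, h'⟩).2
  have heS_mono : ∀ {o o' : Ordinal.{u}}, o < o' → o' < (Order.succ κ).ord →
      eS o < eS o' := by
    intro o o' hoo ho'
    have h2' := ho'.trans_le hotp
    have h1' := hoo.trans h2'
    simp only [heSdef, dif_pos h1', dif_pos h2']
    exact Subtype.coe_lt_coe.2 (enum_lt_enum.2 (Subtype.mk_lt_mk.2 hoo))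
  -- ordinal arithmetic facts
  have hcard_le : ∀ {ξ : Ordinal.{u}}, ξ < (Order.succ κ).ord → ξ.card ≤ κ :=
    fun {ξ} hξ => Order.lt_succ_iff.1 (lt_ord.1 hξ)
  have hplus : ∀ {ξ : Ordinal.{u}}, ξ < (Order.succ κ).ord →
      2 * ξ + 1 < (Order.succ κ).ord := by
    intro ξ hξ
    rw [lt_ord, card_add, card_mul, card_one, card_ofNat]
    have hc : ξ.card ≤ κ := hcard_le hξ
    have h2c : (2 : Cardinal.{u}) ≤ κ := (nat_lt_aleph0 2).le.trans hκ
    have e1 : 2 * ξ.card + 1 ≤ κ := by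
      calc 2 * ξ.card + 1 ≤ κ * κ + 1 := add_le_add (mul_le_mul' h2c hc) le_rfl
        _ = κ + 1 := by rw [mul_eq_self hκ]
        _ = κ := add_one_eq hκ
    exact e1.trans_lt (Order.lt_succ κ)
  have hplus0 : ∀ {ξ : Ordinal.{u}}, ξ < (Order.succ κ).ord →
      2 * ξ < (Order.succ κ).ord :=
    fun {ξ} hξ => (le_self_add (a := 2 * ξ) (b := 1)).trans_lt (hplus hξ)
  have hmono2 : ∀ {η ξ : Ordinal.{u}}, η ≤ ξ → 2 * η ≤ 2 * ξ :=
    fun h => mul_le_mul_right h 2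
  have hstrict2 : ∀ {η ξ : Ordinal.{u}}, η < ξ → 2 * η + 1 < 2 * ξ := by
    intro η ξ h
    have ha : (2 : Ordinal.{u}) * η + 1 < 2 * η + 2 :=
      add_lt_add_right (by norm_num : (1 : Ordinal.{u}) < 2) (2 * η)
    have hb : (2 : Ordinal.{u}) * η + 2 = 2 * (η + 1) := by rw [mul_add, mul_one]
    have hc : (2 : Ordinal.{u}) * (η + 1) ≤ 2 * ξ := by
      refine mul_le_mul_right ?_ 2
      rw [Ordinal.add_one_eq_succ, Order.succ_le_iff]; exact h
    calc (2 : Ordinal.{u}) * η + 1 < 2 * η + 2 := ha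
      _ = 2 * (η + 1) := hb
      _ ≤ 2 * ξ := hc
  -- the κ⁺-indexed data
  set ot : (Order.succ κ).ord.ToType → Ordinal.{u} := fun q =>
    @typein _ (· < ·) isWellOrder_lt q with hotdef
  have hot_lt : ∀ q : (Order.succ κ).ord.ToType, ot q < (Order.succ κ).ord :=
    fun q => typein_lt_self q
  have hot_mono : ∀ {q r : (Order.succ κ).ord.ToType}, q < r → ot q < ot r :=
    fun h => (@typein_lt_typein _ (· < ·) isWellOrder_lt _ _).2 h
  have hot_le : ∀ {q r : (Order.succ κ).ord.ToType}, q ≤ r → ot q ≤ ot r := by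
    intro q r h
    rcases h.lt_or_eq with h' | h'
    · exact (hot_mono h').le
    · rw [h']
  set φt : Ordinal.{u} → lam.ord.ToType := fun ξ => eS (2 * ξ) with hφtdef
  set At : Ordinal.{u} → lam.ord.ToType := fun ξ => eS (2 * ξ + 1) with hAtdef
  set Et : Ordinal.{u} → Set lam.ord.ToType := fun ξ =>
    (fun q : (Order.succ κ).ord.ToType => φt (ot q)) '' {q | ot q ≤ ξ} with hEtdef
  set yt : (Order.succ κ).ord.ToType → X := fun q =>
    wpt (X := X) κ (At (ot q)) (Et (ot q)) with hytdef
  have hEsub : ∀ {ξ : Ordinal.{u}}, ξ < (Order.succ κ).ord →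
      Et ξ ⊆ Set.Iio (At ξ) := by
    intro ξ hξ b hb
    obtain ⟨q, hq, rfl⟩ := hb
    have h1' : 2 * ot q < 2 * ξ + 1 :=
      (hmono2 hq).trans_lt (by rw [Ordinal.add_one_eq_succ]; exact Order.lt_succ _)
    exact heS_mono h1' (hplus hξ)
  have hEcard : ∀ {ξ : Ordinal.{u}}, ξ < (Order.succ κ).ord → #(Et ξ) ≤ κ := by
    intro ξ hξ
    have hlim : Order.IsSuccLimit ((Order.succ κ).ord) :=
      Cardinal.isSuccLimit_ord (hκ.trans (Order.le_succ κ))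
    have hξ1 : ξ + 1 < (Order.succ κ).ord := by
      rw [Ordinal.add_one_eq_succ]; exact hlim.succ_lt hξ
    have hξ1' : ξ + 1 < @type (Order.succ κ).ord.ToType (· < ·) isWellOrder_lt := by
      rwa [type_toType]
    have hlt : ∀ q : (Order.succ κ).ord.ToType,
        q < @enum (Order.succ κ).ord.ToType (· < ·) isWellOrder_lt ⟨ξ + 1, hξ1'⟩ ↔
          ot q < ξ + 1 := by
      intro q
      constructor
      · intro h
        have h2' := (@typein_lt_typein _ (· < ·) isWellOrder_lt q _).2 h
        rwa [@typein_enum _ (· < ·) isWellOrder_lt _ hξ1'] at h2'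
      · intro h
        have h2' : ot q < @typein _ (· < ·) isWellOrder_lt
            (@enum (Order.succ κ).ord.ToType (· < ·) isWellOrder_lt ⟨ξ + 1, hξ1'⟩) := by
          rwa [@typein_enum _ (· < ·) isWellOrder_lt _ hξ1']
        exact (@typein_lt_typein _ (· < ·) isWellOrder_lt _ _).1 h2'
    have hiff : ∀ q : (Order.succ κ).ord.ToType, ot q ≤ ξ ↔
        q < @enum (Order.succ κ).ord.ToType (· < ·) isWellOrder_lt ⟨ξ + 1, hξ1'⟩ := by
      intro q
      rw [hlt q, Ordinal.add_one_eq_succ, Order.lt_succ_iff]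
    have hseteq : {q : (Order.succ κ).ord.ToType | ot q ≤ ξ}
        = Set.Iio (@enum (Order.succ κ).ord.ToType (· < ·) isWellOrder_lt ⟨ξ + 1, hξ1'⟩) :=
      Set.ext fun q => hiff q
    have himg : Et ξ = (fun q : (Order.succ κ).ord.ToType => φt (ot q)) ''
        (Set.Iio (@enum (Order.succ κ).ord.ToType (· < ·) isWellOrder_lt ⟨ξ + 1, hξ1'⟩)) := by
      rw [hEtdef]
      dsimp only
      rw [hseteq]
    rw [himg]
    refine mk_image_le.trans ?_
    have hc1 : #(Set.Iio (@enum (Order.succ κ).ord.ToType (· < ·) isWellOrder_lt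
        ⟨ξ + 1, hξ1'⟩)) = (ξ + 1).card := by
      rw [mk_Iio_toType, @typein_enum _ (· < ·) isWellOrder_lt _ hξ1']
    rw [hc1, card_add, card_one]
    calc ξ.card + 1 ≤ κ + 1 := add_le_add (hcard_le hξ) le_rfl
      _ = κ := add_one_eq hκ
  have hpEt : ∀ {ξ : Ordinal.{u}}, ξ < (Order.succ κ).ord →
      p ∈ ⋂ b ∈ Et ξ, Vopen (X := X) κ b := by
    intro ξ hξ
    refine Set.mem_iInter₂.2 ?_
    rintro b ⟨q, hq, rfl⟩
    exact hpV _ (heS_mem (hplus0 (lt_of_le_of_lt hq hξ)))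
  have hynice : ∀ q : (Order.succ κ).ord.ToType,
      yt q ∈ (⋂ b ∈ Et (ot q), Vopen (X := X) κ b) \
        closure (Dpts (X := X) κ (At (ot q))) := by
    intro q
    rw [hytdef]
    refine wpt_spec κ _ (hEsub (hot_lt q)) ⟨p, Set.mem_diff_of_mem ?_ ?_⟩
    · exact hpEt (hot_lt q)
    · exact hpD _ (heS_mem (hplus (hot_lt q)))
  have hfree : IsFreeSeq yt := by
    intro i
    have hξ : ot i < (Order.succ κ).ord := hot_lt i
    have hsub1 : yt '' {j | j < i} ⊆ Dpts (X := X) κ (φt (ot i)) := by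
      rintro w ⟨j, hj, rfl⟩
      have hAj : At (ot j) < φt (ot i) := heS_mono (hstrict2 (hot_mono hj)) (hplus0 hξ)
      rw [hytdef]
      exact wpt_mem_Dpts κ hAj (hEsub (hot_lt j)) (hEcard (hot_lt j))
    have hsub2 : yt '' {j | i ≤ j} ⊆ Vopen (X := X) κ (φt (ot i)) := by
      rintro w ⟨j, hj, rfl⟩
      have hmem : φt (ot i) ∈ Et (ot j) := ⟨i, hot_le hj, rfl⟩
      exact Set.mem_iInter₂.1 (hynice j).1 _ hmem
    have h5 := (hV (φt (ot i))).2.2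
    refine Set.eq_empty_iff_forall_notMem.2 fun w hw => ?_
    have hww : w ∈ closure (Vopen (X := X) κ (φt (ot i))) ∩
        closure (Dpts (X := X) κ (φt (ot i))) :=
      ⟨closure_mono hsub2 hw.2, closure_mono hsub1 hw.1⟩
    rw [h5] at hww
    exact hww
  have hle := hF (Order.succ κ).ord.ToType yt hfree
  rw [mk_toType, card_ord] at hle
  exact absurd hle (Order.lt_succ κ).not_ge
end

section
/- Let X be a regular sequential space in which every free sequence is countable, and suppose some uncountable cardinal λ ≤ 𝔠⁺ is a caliber of X. Then |X| ≤ 𝔠. -/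
open Cardinal Set Topology

universe u

set_option linter.unusedSectionVars false
set_option maxHeartbeats 1000000

section MyAux
open Filter





section Aux

variable {X : Type u} [TopologicalSpace X] [T1Space X] [RegularSpace X] [SequentialSpace X]

lemma my_card_seqClosure_le (B : Set X) (hB : #B ≤ 𝔠) : #(seqClosure B) ≤ 𝔠 := by
  classical
  have key : ∀ y : seqClosure B, ∃ u : ℕ → B,
      Tendsto (fun n => (u n : X)) atTop (nhds (y : X)) := by
    rintro ⟨y, hy⟩
    obtain ⟨x, hxB, hx⟩ := hy
    exact ⟨fun n => ⟨x n, hxB n⟩, hx⟩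
  choose u hu using key
  have hinj : Function.Injective u := by
    intro y z h
    have hz := hu z
    rw [← h] at hz
    exact Subtype.ext (tendsto_nhds_unique (hu y) hz)
  calc #(seqClosure B) ≤ #(ℕ → B) := Cardinal.mk_le_of_injective hinj
    _ = (#B) ^ (ℵ₀ : Cardinal.{u}) := by
        rw [Cardinal.mk_arrow, Cardinal.mk_nat, Cardinal.lift_aleph0, Cardinal.lift_uzero]
    _ ≤ 𝔠 ^ (ℵ₀ : Cardinal.{u}) := Cardinal.power_le_power_right hB
    _ = 𝔠 := Cardinal.continuum_power_aleph0

/-- In omega_1's order type, every countable family has a strict upper bound. -/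
lemma my_bounded (f : ℕ → (Cardinal.aleph 1 : Cardinal.{u}).ord.ToType) :
    ∃ b, ∀ n, f n < b := by
  classical
  haveI : IsWellOrder (Cardinal.aleph 1 : Cardinal.{u}).ord.ToType (· < ·) := isWellOrder_lt
  have hty : ∀ n, Ordinal.typein
      ((· < ·) : (Cardinal.aleph 1 : Cardinal.{u}).ord.ToType →
        (Cardinal.aleph 1 : Cardinal.{u}).ord.ToType → Prop) (f n)
      < (Cardinal.aleph 1 : Cardinal.{u}).ord :=
    fun n => Ordinal.typein_lt_self (o := (Cardinal.aleph 1 : Cardinal.{u}).ord) (f n)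
  have hsup := lt_of_lt_of_eq (Ordinal.iSup_lt_omega_one (fun n => lt_of_lt_of_eq (hty n) (Cardinal.ord_aleph 1))) (Cardinal.ord_aleph 1).symm
  have hlim : Order.IsSuccLimit ((Cardinal.aleph 1 : Cardinal.{u}).ord) :=
    Cardinal.isSuccLimit_ord (Cardinal.aleph0_le_aleph 1)
  have hsucc := hlim.succ_lt hsup
  refine ⟨Ordinal.enum (· < ·)
    ⟨Order.succ (⨆ n, Ordinal.typein (· < ·) (f n)), by
      rwa [Ordinal.type_toType]⟩, fun n => ?_⟩
  have := Ordinal.typein_enum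
    ((· < ·) : (Cardinal.aleph 1 : Cardinal.{u}).ord.ToType →
      (Cardinal.aleph 1 : Cardinal.{u}).ord.ToType → Prop)
    (o := Order.succ (⨆ n, Ordinal.typein (· < ·) (f n)))
    (by rwa [Ordinal.type_toType])
  rw [← Ordinal.typein_lt_typein ((· < ·) :
    (Cardinal.aleph 1 : Cardinal.{u}).ord.ToType →
      (Cardinal.aleph 1 : Cardinal.{u}).ord.ToType → Prop), this]
  exact lt_of_le_of_lt
    (Ordinal.le_iSup (fun n => Ordinal.typein (· < ·) (f n)) n)
    (Order.lt_succ _)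

lemma my_card_closure_le (A : Set X) (hA : #A ≤ 𝔠) : #(closure A) ≤ 𝔠 := by
  classical
  set W := (Cardinal.aleph 1 : Cardinal.{u}).ord.ToType with hW
  haveI : IsWellOrder W (· < ·) := isWellOrder_lt
  haveI : Nonempty W := by
    rw [hW, Ordinal.toType_nonempty_iff_ne_zero]
    simp only [ne_eq, Cardinal.ord_eq_zero]
    exact fun h => absurd (h ▸ Cardinal.aleph0_lt_aleph_one)
      (by simp [Cardinal.aleph0_ne_zero, not_lt])
  have wf : WellFounded ((· < ·) : W → W → Prop) := wellFounded_lt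
  set F : W → Set X :=
    wf.fix (fun i ih => A ∪ ⋃ j : {j : W // j < i}, seqClosure (ih j j.2)) with hF
  have Feq : ∀ i : W, F i = A ∪ ⋃ j : {j : W // j < i}, seqClosure (F j) := by
    intro i
    rw [hF]
    exact WellFounded.fix_eq wf _ i
  have FsubA : ∀ i : W, A ⊆ F i := fun i => (Feq i) ▸ subset_union_left
  have Fmono : ∀ i j : W, i ≤ j → F i ⊆ F j := by
    intro i j hij
    rw [Feq i, Feq j]
    refine union_subset subset_union_left ?_
    refine iUnion_subset fun k => ?_
    exact (subset_iUnion (fun j' : {j' : W // j' < j} => seqClosure (F j'.1))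
        ⟨k.1, lt_of_lt_of_le k.2 hij⟩).trans subset_union_right
  -- cardinality of each stage
  have hsegW : ∀ i : W, #{j : W // j < i} ≤ 𝔠 := by
    intro i
    have h1 : (Ordinal.typein ((· < ·) : W → W → Prop) i).card < Cardinal.aleph 1 :=
      Cardinal.lt_ord.mp
        (Ordinal.typein_lt_self (o := (Cardinal.aleph 1 : Cardinal.{u}).ord) i)
    have h2 : #{j : W // j < i} < Cardinal.aleph 1 :=
      (@Ordinal.card_typein W (· < ·) isWellOrder_lt i).symm ▸ h1
    exact le_trans h2.le Cardinal.aleph_one_le_continuum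
  have hcard : ∀ i : W, #(F i) ≤ 𝔠 := by
    intro i
    induction i using WellFounded.induction wf with
    | _ i ih =>
      rw [Feq i]
      refine le_trans (Cardinal.mk_union_le _ _) ?_
      have h2 : #(⋃ j : {j : W // j < i}, seqClosure (F j.1)) ≤ 𝔠 := by
        refine le_trans Cardinal.mk_iUnion_le_sum_mk ?_
        refine le_trans (Cardinal.sum_le_sum _ (fun _ => 𝔠) ?_) ?_
        · exact fun j => my_card_seqClosure_le _ (ih j.1 j.2)
        · rw [Cardinal.sum_const']
          refine le_trans (Cardinal.mul_le_max _ _) ?_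
          simp only [max_le_iff]
          exact ⟨⟨hsegW i, le_rfl⟩, aleph0_le_continuum⟩
      calc #A + _ ≤ 𝔠 + 𝔠 := add_le_add hA h2
        _ = 𝔠 := Cardinal.add_eq_self aleph0_le_continuum
  -- the union is sequentially closed
  set D : Set X := ⋃ i : W, F i with hD
  have hDseq : IsSeqClosed D := by
    intro x y hx hy
    choose g hg using fun n => mem_iUnion.mp (hx n)
    obtain ⟨b, hb⟩ := my_bounded g
    have hxb : ∀ n, x n ∈ F b := fun n => Fmono _ _ (le_of_lt (hb n)) (hg n)
    obtain ⟨b2, hb2⟩ := my_bounded (fun _ => b)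
    have hyb : y ∈ seqClosure (F b) := ⟨x, hxb, hy⟩
    have : y ∈ F b2 := by
      rw [Feq b2]
      exact Or.inr (mem_iUnion.mpr ⟨⟨b, hb2 0⟩, hyb⟩)
    exact mem_iUnion.mpr ⟨b2, this⟩
  have hclsub : closure A ⊆ D := by
    refine closure_minimal ?_ hDseq.isClosed
    obtain ⟨i⟩ := (inferInstance : Nonempty W)
    exact (FsubA i).trans (subset_iUnion F i)
  refine le_trans (Cardinal.mk_le_mk_of_subset hclsub) ?_
  refine le_trans Cardinal.mk_iUnion_le_sum_mk ?_
  refine le_trans (Cardinal.sum_le_sum _ (fun _ => 𝔠) hcard) ?_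
  rw [Cardinal.sum_const']
  refine le_trans (Cardinal.mul_le_max _ _) ?_
  have : #W ≤ 𝔠 := by
    rw [hW, Cardinal.mk_toType, Cardinal.card_ord]
    exact Cardinal.aleph_one_le_continuum
  simp only [max_le_iff]
  exact ⟨⟨this, le_rfl⟩, aleph0_le_continuum⟩

end Aux






lemma my_card_countableSubsets {α : Type u} (T : Set α) (hT : #T ≤ 𝔠) :
    #{z : Set α // z.Countable ∧ z ⊆ T} ≤ 𝔠 := by
  classical
  have key : ∀ z : {z : Set α // z.Countable ∧ z ⊆ T}, z.1.Nonempty →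
      ∃ f : ℕ → T, z.1 = Subtype.val '' Set.range f := by
    rintro ⟨z, hzc, hzT⟩ hne
    obtain ⟨f0, hf0⟩ := hzc.exists_eq_range hne
    refine ⟨fun n => ⟨f0 n, hzT (hf0 ▸ ⟨n, rfl⟩)⟩, ?_⟩
    ext x
    simp only [Set.mem_image, Set.mem_range]
    constructor
    · intro hx
      obtain ⟨n, hn⟩ : x ∈ range f0 := hf0 ▸ hx
      exact ⟨⟨x, hzT hx⟩, ⟨n, Subtype.ext hn⟩, rfl⟩
    · rintro ⟨⟨y, hy⟩, ⟨n, hn⟩, rfl⟩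
      have h1 : y ∈ range f0 := ⟨n, congrArg Subtype.val hn⟩
      show y ∈ z
      rw [hf0]
      exact h1
  have hinj : ∃ Ψ : {z : Set α // z.Countable ∧ z ⊆ T} → Option (ℕ → T),
      Function.Injective Ψ := by
    refine ⟨fun z => if h : z.1.Nonempty then some ((key z h).choose) else none, ?_⟩
    intro z w hzw
    simp only at hzw
    by_cases hz : z.1.Nonempty
    · by_cases hw : w.1.Nonempty
      · rw [dif_pos hz, dif_pos hw] at hzw
        have h2 := Option.some.inj hzw
        apply Subtype.ext
        rw [(key z hz).choose_spec, (key w hw).choose_spec, h2]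
      · rw [dif_pos hz, dif_neg hw] at hzw
        exact absurd hzw (by simp)
    · by_cases hw : w.1.Nonempty
      · rw [dif_neg hz, dif_pos hw] at hzw
        exact absurd hzw (by simp)
      · apply Subtype.ext
        rw [Set.not_nonempty_iff_eq_empty.mp hz, Set.not_nonempty_iff_eq_empty.mp hw]
  obtain ⟨Ψ, hΨ⟩ := hinj
  calc #{z : Set α // z.Countable ∧ z ⊆ T} ≤ #(Option (ℕ → T)) :=
        Cardinal.mk_le_of_injective hΨ
    _ = #(ℕ → T) + 1 := Cardinal.mk_option
    _ ≤ 𝔠 + 1 := by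
        refine add_le_add_left ?_ 1
        calc #(ℕ → T) = (#T) ^ (ℵ₀ : Cardinal.{u}) := by
              rw [Cardinal.mk_arrow, Cardinal.mk_nat, Cardinal.lift_aleph0,
                Cardinal.lift_uzero]
          _ ≤ 𝔠 ^ (ℵ₀ : Cardinal.{u}) := Cardinal.power_le_power_right hT
          _ = 𝔠 := Cardinal.continuum_power_aleph0
    _ ≤ 𝔠 + 𝔠 := add_le_add_right (le_trans one_le_aleph0 aleph0_le_continuum) 𝔠
    _ = 𝔠 := Cardinal.add_eq_self aleph0_le_continuum

section Chip

variable {X : Type u} [TopologicalSpace X] [T1Space X] [RegularSpace X]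

lemma my_exists_chip (hbig : 𝔠 < #X) {H : Set X} (hcl : IsClosed H) (hH : #H ≤ 𝔠) :
    ∃ u : Set X, IsOpen u ∧ u.Nonempty ∧ closure u ∩ H = ∅ := by
  have hex : ∃ x : X, x ∉ H := by
    by_contra h
    push_neg at h
    have h1 : (univ : Set X) ⊆ H := fun x _ => h x
    have := (Cardinal.mk_le_mk_of_subset h1).trans hH
    rw [Cardinal.mk_univ] at this
    exact absurd hbig (not_lt.mpr this)
  obtain ⟨x, hx⟩ := hex
  have hHc : Hᶜ ∈ nhds x := hcl.isOpen_compl.mem_nhds hx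
  obtain ⟨t, ⟨ht_mem, ht_closed⟩, hts⟩ := (closed_nhds_basis x).mem_iff.mp hHc
  refine ⟨interior t, isOpen_interior, ⟨x, mem_interior_iff_mem_nhds.mpr ht_mem⟩, ?_⟩
  have h1 : closure (interior t) ⊆ t := closure_minimal interior_subset ht_closed
  rw [Set.eq_empty_iff_forall_notMem]
  rintro y ⟨hy1, hy2⟩
  exact hts (h1 hy1) hy2

end Chip

end MyAux

namespace Stmt16Helper

/-- The family of "trace points" chosen from countable subintersections of a family of sets,
over countable index sets bounded by `i`. -/
noncomputable def gens {X : Type u} {ι : Type u} [LT ι] (i : ι) (V : ι → Set X) : Set X :=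
  ⋃ (z : Set ι) (_ : z.Countable ∧ ∀ j ∈ z, j < i),
    {y : X | ∃ h : (⋂ j ∈ z, V j).Nonempty, y = h.some}

lemma gens_congr {X : Type u} {ι : Type u} [LT ι] (i : ι) (V V' : ι → Set X)
    (h : ∀ j, j < i → V j = V' j) : gens i V = gens i V' := by
  unfold gens
  refine iUnion_congr fun z => iUnion_congr fun hz => ?_
  have hiff : (⋂ j ∈ z, V j) = ⋂ j ∈ z, V' j := iInter₂_congr fun j hj => h j (hz.2 j hj)
  rw [hiff]

open Classical in
/-- Pick a nonempty open set whose closure misses `H`, if one exists. -/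
noncomputable def pick {X : Type u} [TopologicalSpace X] (H : Set X) : Set X :=
  if h : ∃ u : Set X, IsOpen u ∧ u.Nonempty ∧ closure u ∩ H = ∅ then h.choose else ∅

lemma pick_spec {X : Type u} [TopologicalSpace X] {H : Set X}
    (hex : ∃ u : Set X, IsOpen u ∧ u.Nonempty ∧ closure u ∩ H = ∅) :
    IsOpen (pick H) ∧ (pick H).Nonempty ∧ closure (pick H) ∩ H = ∅ := by
  classical
  unfold pick
  rw [dif_pos hex]
  exact hex.choose_spec

/-- The recursive construction of the open family. -/
noncomputable def UFam {X : Type u} [TopologicalSpace X] {ι : Type u} [LinearOrder ι]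
    [WellFoundedLT ι] : ι → Set X :=
  wellFounded_lt.fix fun i ih =>
    pick (closure (gens i (fun j => if h : j < i then ih j h else (∅ : Set X))))

lemma UFam_eq {X : Type u} [TopologicalSpace X] {ι : Type u} [LinearOrder ι]
    [WellFoundedLT ι] (i : ι) :
    UFam (X := X) i = pick (closure (gens i (UFam (X := X) (ι := ι)))) := by
  have h := WellFounded.fix_eq (wellFounded_lt)
    (fun (i : ι) ih =>
      pick (closure (gens i (fun j => if hji : j < i then ih j hji else (∅ : Set X))))) i
  calc UFam (X := X) i
      = pick (closure (gens i (fun j => if hji : j < i then UFam (X := X) j else ∅))) := h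
    _ = pick (closure (gens i (UFam (X := X) (ι := ι)))) := by
        rw [gens_congr i _ (UFam (X := X) (ι := ι)) (fun j hj => dif_pos hj)]

end Stmt16Helper

/-- a regular sequential space in which every free sequence is
countable and which has an uncountable caliber `λ ≤ 𝔠⁺` has cardinality at most `𝔠`. -/
theorem stmt16 {X : Type u} [TopologicalSpace X] [T1Space X] [RegularSpace X]
    [SequentialSpace X]
    (hF : ∀ (ι : Type u) [LinearOrder ι] [WellFoundedLT ι] (f : ι → X),
      IsFreeSeq f → #ι ≤ ℵ₀)
    (lam : Cardinal.{u}) (h1 : ℵ₀ < lam) (h2 : lam ≤ Order.succ Cardinal.continuum)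
    (hcal : IsCaliber X lam) :
    #X ≤ Cardinal.continuum := by
  classical
  by_contra hcon
  push_neg at hcon
  haveI hXne : Nonempty X := Cardinal.mk_ne_zero_iff.mp (lt_of_le_of_lt (zero_le : (0 : Cardinal.{u}) ≤ 𝔠) hcon).ne'
  obtain ⟨x₀⟩ := hXne
  haveI : IsWellOrder lam.ord.ToType (· < ·) := isWellOrder_lt
  have hcardι : #lam.ord.ToType = lam := by rw [Cardinal.mk_toType, Cardinal.card_ord]
  -- initial segments have size at most continuum
  have hseg : ∀ i : lam.ord.ToType,
      #({j : lam.ord.ToType | j < i} : Set lam.ord.ToType) ≤ 𝔠 := by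
    intro i
    have ha : (Ordinal.typein ((· < ·) : lam.ord.ToType → lam.ord.ToType → Prop) i).card
        < lam :=
      Cardinal.lt_ord.mp (Ordinal.typein_lt_self (o := lam.ord) i)
    have hb : #({j : lam.ord.ToType | j < i} : Set lam.ord.ToType) < lam :=
      (@Ordinal.card_typein lam.ord.ToType (· < ·) isWellOrder_lt i).symm ▸ ha
    have hc : #({j : lam.ord.ToType | j < i} : Set lam.ord.ToType) < Order.succ 𝔠 :=
      lt_of_lt_of_le hb h2
    exact (Order.lt_succ_iff_of_not_isMax hcon.not_isMax).mp hc
  set U : lam.ord.ToType → Set X := Stmt16Helper.UFam with hUdef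
  -- specification of the U's
  have hUspec : ∀ i, IsOpen (U i) ∧ (U i).Nonempty ∧
      closure (U i) ∩ closure (Stmt16Helper.gens i U) = ∅ := by
    intro i
    have hsub : Stmt16Helper.gens i U ⊆ Set.range
        (fun z : {z : Set lam.ord.ToType // z.Countable ∧ z ⊆ {j | j < i}} =>
          if h : (⋂ j ∈ z.1, U j).Nonempty then h.some else x₀) := by
      rintro y hy
      simp only [Stmt16Helper.gens, mem_iUnion] at hy
      obtain ⟨z, ⟨hzc, hzi⟩, h, rfl⟩ := hy
      exact ⟨⟨z, hzc, hzi⟩, dif_pos h⟩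
    have hcard : #(Stmt16Helper.gens i U) ≤ 𝔠 :=
      le_trans (Cardinal.mk_le_mk_of_subset hsub)
        (le_trans Cardinal.mk_range_le (my_card_countableSubsets _ (hseg i)))
    have hex : ∃ u : Set X, IsOpen u ∧ u.Nonempty ∧
        closure u ∩ closure (Stmt16Helper.gens i U) = ∅ :=
      my_exists_chip hcon isClosed_closure (my_card_closure_le _ hcard)
    have heq : U i = Stmt16Helper.pick (closure (Stmt16Helper.gens i U)) := by
      rw [hUdef]; exact Stmt16Helper.UFam_eq i
    rw [heq]
    exact Stmt16Helper.pick_spec hex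
  -- apply the caliber hypothesis
  obtain ⟨S, hScard, p, hp⟩ := hcal lam.ord.ToType U hcardι
    (fun i => ⟨(hUspec i).1, (hUspec i).2.1⟩)
  have hpU : ∀ i ∈ S, p ∈ U i := fun i hi => mem_iInter₂.mp hp i hi
  -- extract an omega_1-indexed strictly increasing sequence inside S
  haveI : IsWellOrder (↥S) (· < ·) := isWellOrder_lt
  haveI : IsWellOrder (Cardinal.aleph 1 : Cardinal.{u}).ord.ToType (· < ·) := isWellOrder_lt
  have hSle : (Cardinal.aleph 1 : Cardinal.{u}).ord ≤
      Ordinal.type ((· < ·) : ↥S → ↥S → Prop) := by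
    by_contra hlt
    push_neg at hlt
    have ha := Cardinal.lt_ord.mp hlt
    rw [Ordinal.card_type, hScard] at ha
    have hb : Cardinal.aleph 1 ≤ lam := by
      rw [← Cardinal.succ_aleph0]
      exact Order.succ_le_of_lt h1
    exact absurd ha (not_lt.mpr hb)
  obtain ⟨emb⟩ : Nonempty
      (((· < ·) : (Cardinal.aleph 1 : Cardinal.{u}).ord.ToType →
          (Cardinal.aleph 1 : Cardinal.{u}).ord.ToType → Prop) ↪r
        ((· < ·) : ↥S → ↥S → Prop)) := by
    refine Ordinal.type_le_iff'.mp ?_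
    rwa [Ordinal.type_toType]
  set s : (Cardinal.aleph 1 : Cardinal.{u}).ord.ToType → lam.ord.ToType :=
    fun ν => ((emb ν : ↥S) : lam.ord.ToType) with hsdef
  have hsm : StrictMono s := fun ν μ h => Subtype.coe_lt_coe.mpr (emb.map_rel_iff.mpr h)
  have smem : ∀ ν, s ν ∈ S := fun ν => (emb ν).2
  -- the countable index sets
  set zset : (Cardinal.aleph 1 : Cardinal.{u}).ord.ToType → Set lam.ord.ToType :=
    fun ν => s '' {ξ | ξ ≤ ν} with hzdef
  have hzcount : ∀ ν, (zset ν).Countable := by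
    intro ν
    apply Set.Countable.image
    have hlt : ({ξ : (Cardinal.aleph 1 : Cardinal.{u}).ord.ToType | ξ < ν} :
        Set (Cardinal.aleph 1 : Cardinal.{u}).ord.ToType).Countable := by
      rw [Cardinal.countable_iff_lt_aleph_one]
      have ha : (Ordinal.typein
          ((· < ·) : (Cardinal.aleph 1 : Cardinal.{u}).ord.ToType →
            (Cardinal.aleph 1 : Cardinal.{u}).ord.ToType → Prop) ν).card
          < Cardinal.aleph 1 :=
        Cardinal.lt_ord.mp
          (Ordinal.typein_lt_self (o := (Cardinal.aleph 1 : Cardinal.{u}).ord) ν)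
      exact (@Ordinal.card_typein _ (· < ·) isWellOrder_lt ν).symm ▸ ha
    have hIic : {ξ : (Cardinal.aleph 1 : Cardinal.{u}).ord.ToType | ξ ≤ ν} =
        insert ν {ξ | ξ < ν} := by
      ext x
      simp only [mem_setOf_eq, mem_insert_iff]
      exact le_iff_eq_or_lt
    rw [hIic]
    exact hlt.insert ν
  -- the free sequence
  have hzne : ∀ ν, (⋂ j ∈ zset ν, U j).Nonempty := by
    intro ν
    refine ⟨p, mem_iInter₂.mpr ?_⟩
    rintro j ⟨ξ, _, rfl⟩
    exact hpU _ (smem ξ)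
  set q : (Cardinal.aleph 1 : Cardinal.{u}).ord.ToType → X := fun ν => (hzne ν).some
    with hqdef
  have hfree : IsFreeSeq q := by
    intro ν
    have hinit : q '' {μ | μ < ν} ⊆ Stmt16Helper.gens (s ν) U := by
      rintro y ⟨μ, hμ, rfl⟩
      have hcond : (zset μ).Countable ∧ ∀ j ∈ zset μ, j < s ν := by
        refine ⟨hzcount μ, ?_⟩
        rintro j ⟨ξ, hξ, rfl⟩
        exact lt_of_le_of_lt (hsm.monotone hξ) (hsm hμ)
      show q μ ∈ Stmt16Helper.gens (s ν) U
      simp only [Stmt16Helper.gens, mem_iUnion]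
      exact ⟨zset μ, hcond, hzne μ, rfl⟩
    have htail : q '' {μ | ν ≤ μ} ⊆ U (s ν) := by
      rintro y ⟨μ, hμ, rfl⟩
      exact mem_iInter₂.mp ((hzne μ).some_mem) (s ν) ⟨ν, hμ, rfl⟩
    have hdisj := (hUspec (s ν)).2.2
    rw [Set.eq_empty_iff_forall_notMem]
    rintro y ⟨hy1, hy2⟩
    have hy1' : y ∈ closure (Stmt16Helper.gens (s ν) U) := closure_mono hinit hy1
    have hy2' : y ∈ closure (U (s ν)) := closure_mono htail hy2
    rw [Set.eq_empty_iff_forall_notMem] at hdisj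
    exact hdisj y ⟨hy2', hy1'⟩
  have hcount := hF _ q hfree
  rw [Cardinal.mk_toType, Cardinal.card_ord] at hcount
  exact absurd hcount (not_le.mpr Cardinal.aleph0_lt_aleph_one)
end

section
/- Every Hausdorff sequential space with a dense subset of cardinality at most 𝔠 has cardinality at most 𝔠. -/
open Cardinal Set Topology

universe u

open Filter

noncomputable def seqIter {X : Type u} [TopologicalSpace X] (D : Set X) :
    (Cardinal.aleph 1 : Cardinal.{u}).ord.ToType → Set X :=
  (IsWellFounded.wf (α := (Cardinal.aleph 1 : Cardinal.{u}).ord.ToType) (r := (· < ·))).fix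
    (fun w ih => D ∪ ⋃ p : Set.Iio w, seqClosure (ih p p.2))

theorem seqIter_eq {X : Type u} [TopologicalSpace X] (D : Set X)
    (w : (Cardinal.aleph 1 : Cardinal.{u}).ord.ToType) :
    seqIter D w = D ∪ ⋃ p : Set.Iio w, seqClosure (seqIter D p) :=
  WellFounded.fix_eq _ _ _

theorem mk_seqClosure_le {X : Type u} [TopologicalSpace X] [T2Space X] (A : Set X) :
    #(seqClosure A) ≤ #A ^ Cardinal.aleph0 := by
  have h : ∀ x : seqClosure A, ∃ u : ℕ → A,
      Tendsto (fun n => ((u n : X))) atTop (nhds (x : X)) := by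
    rintro ⟨x, u, hu, hlim⟩
    exact ⟨fun n => ⟨u n, hu n⟩, hlim⟩
  choose f hf using h
  have hinj : Function.Injective f := by
    intro x y hxy
    exact Subtype.ext (tendsto_nhds_unique (hf x) (hxy ▸ hf y))
  calc #(seqClosure A) ≤ #(ℕ → A) := Cardinal.mk_le_of_injective hinj
    _ = Cardinal.lift.{0} #A ^ Cardinal.lift.{u} #ℕ := Cardinal.mk_arrow ℕ A
    _ = #A ^ Cardinal.aleph0 := by simp

theorem seqIter_subset_D {X : Type u} [TopologicalSpace X] (D : Set X)
    (w : (Cardinal.aleph 1 : Cardinal.{u}).ord.ToType) : D ⊆ seqIter D w := by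
  rw [seqIter_eq]; exact Set.subset_union_left

theorem seqIter_mono {X : Type u} [TopologicalSpace X] (D : Set X)
    {w w' : (Cardinal.aleph 1 : Cardinal.{u}).ord.ToType} (h : w' ≤ w) : seqIter D w' ⊆ seqIter D w := by
  rcases eq_or_lt_of_le h with rfl | h
  · rfl
  · rw [seqIter_eq D w]
    refine subset_trans ?_ Set.subset_union_right
    exact subset_trans subset_seqClosure
      (Set.subset_iUnion (fun p : Set.Iio w => seqClosure (seqIter D p)) ⟨w', h⟩)

theorem mk_seqIter_le {X : Type u} [TopologicalSpace X] [T2Space X] (D : Set X)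
    (hcard : #D ≤ Cardinal.continuum) (w : (Cardinal.aleph 1 : Cardinal.{u}).ord.ToType) :
    #(seqIter D w) ≤ Cardinal.continuum := by
  refine (IsWellFounded.wf (α := (Cardinal.aleph 1 : Cardinal.{u}).ord.ToType) (r := (· < ·))).induction (C := fun w => #(seqIter D w) ≤ Cardinal.continuum) w ?_
  intro w ih
  · rw [seqIter_eq]
    refine le_trans (Cardinal.mk_union_le _ _) ?_
    have h1 : #(⋃ p : Set.Iio w, seqClosure (seqIter D p)) ≤ Cardinal.continuum := by
      refine (Cardinal.mk_iUnion_le fun p : Set.Iio w => seqClosure (seqIter D p)).trans ?_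
      have hIio : #(Set.Iio w) ≤ Cardinal.continuum := by
        refine le_trans (Cardinal.mk_le_mk_of_subset (Set.subset_univ _)) ?_
        rw [Cardinal.mk_univ, Cardinal.mk_toType, Cardinal.card_ord]
        exact Cardinal.aleph_one_le_continuum
      have hsup : ⨆ p : Set.Iio w, #(seqClosure (seqIter D p)) ≤ Cardinal.continuum := by
        refine ciSup_le' fun p => ?_
        calc #(seqClosure (seqIter D p)) ≤ #(seqIter D p) ^ Cardinal.aleph0 :=
              mk_seqClosure_le _
          _ ≤ Cardinal.continuum ^ Cardinal.aleph0 :=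
              Cardinal.power_le_power_right (ih p p.2)
          _ = Cardinal.continuum := Cardinal.continuum_power_aleph0
      calc #(Set.Iio w) * ⨆ p : Set.Iio w, #(seqClosure (seqIter D p))
          ≤ Cardinal.continuum * Cardinal.continuum := mul_le_mul' hIio hsup
        _ = Cardinal.continuum := by simp
    calc #D + #(⋃ p : Set.Iio w, seqClosure (seqIter D p))
        ≤ Cardinal.continuum + Cardinal.continuum := add_le_add hcard h1
      _ = Cardinal.continuum := by simp

/-- a Hausdorff sequential space with a dense subset of cardinality
at most `𝔠` has cardinality at most `𝔠`. -/
theorem stmt17 {X : Type u} [TopologicalSpace X] [T2Space X] [SequentialSpace X]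
    (D : Set X) (hD : Dense D) (hcard : #D ≤ Cardinal.continuum) :
    #X ≤ Cardinal.continuum := by
  classical
  set Y : Set X := ⋃ w : (Cardinal.aleph 1 : Cardinal.{u}).ord.ToType, seqIter D w with hY
  have hWne : Nonempty ((Cardinal.aleph 1 : Cardinal.{u}).ord.ToType) := by
    rw [Ordinal.toType_nonempty_iff_ne_zero, Ne, Cardinal.ord_eq_zero]
    exact (Cardinal.aleph_pos 1).ne'
  have hseq : IsSeqClosed Y := by
    intro u x hu hx
    have hex : ∀ n, ∃ w, u n ∈ seqIter D w := fun n => Set.mem_iUnion.1 (hu n)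
    choose w hw using hex
    set e := Ordinal.ToType.mk (o := (Cardinal.aleph 1 : Cardinal.{u}).ord) with he
    set o : ℕ → Ordinal.{u} := fun n => (e.symm (w n) : Ordinal) with ho
    have holt : ∀ n, o n < (Cardinal.aleph 1 : Cardinal.{u}).ord := fun n => (e.symm (w n)).2
    have hsup : (⨆ n, o n) < (Cardinal.aleph 1 : Cardinal.{u}).ord := by
      refine Ordinal.iSup_lt_ord_lift ?_ holt
      rw [Cardinal.isRegular_aleph_one.cof_ord]
      simp [Cardinal.aleph0_lt_aleph_one]
    have hsucc : Order.succ (⨆ n, o n) < (Cardinal.aleph 1 : Cardinal.{u}).ord :=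
      (Cardinal.isSuccLimit_ord (Cardinal.aleph0_le_aleph 1)).succ_lt hsup
    set wsup := e ⟨⨆ n, o n, hsup⟩ with hwsup
    set wstar := e ⟨Order.succ (⨆ n, o n), hsucc⟩ with hwstar
    have hle : ∀ n, w n ≤ wsup := by
      intro n
      have : e.symm (w n) ≤ (⟨⨆ n, o n, hsup⟩ : Set.Iio _) := by
        exact Subtype.mk_le_mk.2 (le_ciSup (Ordinal.bddAbove_range o) n)
      have := e.monotone this
      simpa using this
    have hx' : x ∈ seqClosure (seqIter D wsup) :=
      ⟨u, fun n => seqIter_mono D (hle n) (hw n), hx⟩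
    have hlt : wsup < wstar := by
      refine e.strictMono ?_
      exact Subtype.mk_lt_mk.2 (Order.lt_succ_of_not_isMax (not_isMax _))
    have : x ∈ seqIter D wstar := by
      rw [seqIter_eq]
      refine Or.inr ?_
      exact Set.mem_iUnion.2 ⟨⟨wsup, hlt⟩, hx'⟩
    exact Set.mem_iUnion.2 ⟨wstar, this⟩
  have hYclosed : IsClosed Y := hseq.isClosed
  have hDY : D ⊆ Y := fun x hx =>
    Set.mem_iUnion.2 ⟨Classical.arbitrary _, seqIter_subset_D D _ hx⟩
  have hYuniv : Y = Set.univ := by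
    have := hD.closure_eq
    have h2 : closure D ⊆ Y := hYclosed.closure_subset_iff.2 hDY
    rw [this] at h2
    exact Set.eq_univ_of_univ_subset h2
  have : #X = #Y := by rw [hYuniv, Cardinal.mk_univ]
  rw [this]
  refine (Cardinal.mk_iUnion_le fun w => seqIter D w).trans ?_
  have h1 : #((Cardinal.aleph 1 : Cardinal.{u}).ord.ToType) ≤ Cardinal.continuum := by
    rw [Cardinal.mk_toType, Cardinal.card_ord]
    exact Cardinal.aleph_one_le_continuum
  have h2 : ⨆ w, #(seqIter D w) ≤ Cardinal.continuum :=
    ciSup_le' fun w => mk_seqIter_le D hcard w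
  calc #((Cardinal.aleph 1 : Cardinal.{u}).ord.ToType) * ⨆ w, #(seqIter D w)
      ≤ Cardinal.continuum * Cardinal.continuum := mul_le_mul' h1 h2
    _ = Cardinal.continuum := by simp
end

section
/- Let X be an almost discretely Lindelöf space, let g(X) denote the supremum of cardinalities of closures of discrete subsets of X, and let hL(X) denote the hereditary Lindelöf degree. Then hL(X) ≤ g(X), i.e., every right-separated subset of X has cardinality at most g(X). -/
open Cardinal Set Topology

universe u

/-- in an almost discretely Lindelöf space, every right-separated
subset has cardinality at most `g(X)`, the supremum of cardinalities of closures of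
discrete subsets; that is, `hL(X) ≤ g(X)`. -/
theorem stmt19 {X : Type u} [TopologicalSpace X] (hADL : AlmostDiscretelyLindelof X)
    (R : Set X) (hR : RightSeparated R) :
    #R ≤ ⨆ D : {D : Set X // IsDiscreteSubset D}, #(closure D.1) := by
  obtain ⟨r, hwo, hsep⟩ := hR
  -- D = relatively isolated points of R
  set D : Set X := {x | x ∈ R ∧ ∃ U : Set X, IsOpen U ∧ U ∩ R = {x}} with hD
  have hDdisc : IsDiscreteSubset D := by
    rintro x ⟨hxR, U, hUo, hUR⟩
    refine ⟨U, hUo, ?_⟩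
    apply Set.Subset.antisymm
    · intro y ⟨hyU, hyD⟩
      have : y ∈ U ∩ R := ⟨hyU, hyD.1⟩
      rwa [hUR] at this
    · rintro y hy
      rw [Set.mem_singleton_iff] at hy
      subst hy
      have hxU : y ∈ U ∩ R := by rw [hUR]; exact Set.mem_singleton _
      exact ⟨hxU.1, hxR, U, hUo, hUR⟩
  have hRsub : R ⊆ closure D := by
    intro x hx
    rw [mem_closure_iff]
    intro V hVo hxV
    -- the set of elements of R in V is nonempty; take r-minimal
    have : IsWellFounded R r := ⟨hwo.wf⟩
    set S : Set R := {b : R | (b : X) ∈ V} with hS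
    have hSne : S.Nonempty := ⟨⟨x, hx⟩, hxV⟩
    obtain ⟨a, haS, hamin⟩ := hwo.wf.has_min S hSne
    obtain ⟨U, hUo, haU, hU⟩ := hsep a
    refine ⟨a, ⟨haS, ?_⟩⟩
    refine ⟨a.2, U ∩ V, hUo.inter hVo, ?_⟩
    apply Set.Subset.antisymm
    · rintro y ⟨⟨hyU, hyV⟩, hyR⟩
      have h1 : ¬ r a ⟨y, hyR⟩ := hU ⟨y, hyR⟩ hyU
      have h2 : ¬ r ⟨y, hyR⟩ a := hamin ⟨y, hyR⟩ hyV
      have := hwo.trichotomous a ⟨y, hyR⟩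
      exact (congrArg Subtype.val (this h1 h2)).symm
    · rintro y rfl
      exact ⟨⟨haU, haS⟩, a.2⟩
  have h1 : #R ≤ #(closure D) := Cardinal.mk_le_mk_of_subset hRsub
  refine h1.trans ?_
  exact le_ciSup (Cardinal.bddAbove_range _) (⟨D, hDdisc⟩ : {D : Set X // IsDiscreteSubset D})
end
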